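/- arXiv:1304.1317 — 4 statements merged into one kernel-verified Lean document; each statement's English description precedes it below -/
import Mathlib

section
/- Let 0 < s < 1 and 2 − 2s < α ≤ 2, and let Ω ⊂ ℝ² be a bounded set. There is a constant C, depending only on s, α and Ω, such that for every Borel probability measure μ supported in Ω which is α-dimensional with constant c, and every g ∈ L²(ℝ²), one has ∫ (∫_{ℝ²} |x−y|^{s−2} |g(y)| dy) dμ(x) ≤ C √c ‖g‖_{L²(ℝ²)}. -/
open MeasureTheory Real Filter
open scoped ENNReal

noncomputable section

/-- Fourier transform with the convention `f̂ ξ = ∫ f z e^{-i z·ξ} dz`. -/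
def FT (f : ℝ × ℝ → ℂ) (ξ : ℝ × ℝ) : ℂ :=
  ∫ z : ℝ × ℝ, Complex.exp (-(Complex.I * ((z.1 * ξ.1 + z.2 * ξ.2 : ℝ) : ℂ))) * f z

/-- The Bukhgeim phase `φ_{k,x}(z) = (k/4)((z₁-x₁)² - (z₂-x₂)²)`. -/
def phase (k : ℝ) (x z : ℝ × ℝ) : ℝ :=
  k / 4 * ((z.1 - x.1) ^ 2 - (z.2 - x.2) ^ 2)

/-- Squared weighted (homogeneous Sobolev-type) norm `∫ |ξ|^{2s} |g ξ|² dξ`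
on the Fourier side. -/
def wNormSq (s : ℝ) (g : ℝ × ℝ → ℂ) : ℝ≥0∞ :=
  ∫⁻ ξ : ℝ × ℝ, ENNReal.ofReal ((ξ.1 ^ 2 + ξ.2 ^ 2) ^ s) * (‖g ξ‖₊ : ℝ≥0∞) ^ 2

/-- Squared inhomogeneous Sobolev norm `∫ (1+|ξ|²)^s |g ξ|² dξ` on the Fourier side. -/
def sobNormSq (s : ℝ) (g : ℝ × ℝ → ℂ) : ℝ≥0∞ :=
  ∫⁻ ξ : ℝ × ℝ, ENNReal.ofReal ((1 + ξ.1 ^ 2 + ξ.2 ^ 2) ^ s) * (‖g ξ‖₊ : ℝ≥0∞) ^ 2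

/-- `Fhat` is the Fourier transform of the (square-integrable) function `F`, in the
distributional sense given by the multiplication formula against Schwartz functions. -/
def IsFT (F Fhat : ℝ × ℝ → ℂ) : Prop :=
  ∀ ψ : SchwartzMap (ℝ × ℝ) ℂ,
    ∫ z : ℝ × ℝ, F z * FT (fun w => ψ w) z = ∫ ξ : ℝ × ℝ, Fhat ξ * ψ ξ

/-- The modulation operator `M^{εk}F = χ_Q e^{iε φ_{k,x}} F`. -/
def Mop (Q : Set (ℝ × ℝ)) (ε k : ℝ) (x : ℝ × ℝ) (F : ℝ × ℝ → ℂ) : ℝ × ℝ → ℂ :=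
  Q.indicator fun z => Complex.exp (Complex.I * ((ε * phase k x z : ℝ) : ℂ)) * F z

/-- The Cauchy transform `∂_z^{-1} g (z) = (1/π) ∫ g(w) / ((z₁-w₁) - i(z₂-w₂)) dw`. -/
def CauchyZ (g : ℝ × ℝ → ℂ) (z : ℝ × ℝ) : ℂ :=
  (Real.pi : ℂ)⁻¹ *
    ∫ w : ℝ × ℝ, g w / (((z.1 - w.1 : ℝ) : ℂ) - Complex.I * ((z.2 - w.2 : ℝ) : ℂ))

/-- Euclidean ball in `ℝ × ℝ`. -/
def EBall (x : ℝ × ℝ) (r : ℝ) : Set (ℝ × ℝ) :=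
  {y | (y.1 - x.1) ^ 2 + (y.2 - x.2) ^ 2 < r ^ 2}

/-- The Bukhgeim main term `T^k_1[V](x) = (k/(4π)) ∫ e^{iφ_{k,x}(z)} V(z) dz`. -/
def TT (V : ℝ × ℝ → ℂ) (k : ℝ) (x : ℝ × ℝ) : ℂ :=
  ((k / (4 * Real.pi) : ℝ) : ℂ) *
    ∫ z : ℝ × ℝ, Complex.exp (Complex.I * ((phase k x z : ℝ) : ℂ)) * V z

namespace Stmt8Aux

lemma dyadic_le {X : Type*} [MeasurableSpace X] (ν : Measure X) (u : X → ℝ≥0∞)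
    (S : ℕ → Set X) (hS : ∀ j, MeasurableSet (S j)) (a : ℕ → ℝ≥0∞)
    (h : ∀ᵐ x ∂ν, ∃ j, x ∈ S j ∧ u x ≤ a j) :
    ∫⁻ x, u x ∂ν ≤ ∑' j, a j * ν (S j) := by
  have h1 : ∫⁻ x, u x ∂ν ≤ ∫⁻ x, ∑' j, (S j).indicator (fun _ => a j) x ∂ν := by
    refine lintegral_mono_ae (h.mono ?_)
    rintro x ⟨j, hj, hu⟩
    refine hu.trans ?_
    have hx : (S j).indicator (fun _ => a j) x = a j := Set.indicator_of_mem hj _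
    rw [← hx]
    exact ENNReal.le_tsum j
  refine h1.trans ?_
  rw [lintegral_tsum (fun j => (measurable_const.indicator (hS j)).aemeasurable)]
  exact le_of_eq (tsum_congr fun j => lintegral_indicator_const (hS j) _)

lemma exists_dyadic_down {R t : ℝ} (ht : 0 < t) (hR : t ≤ R) :
    ∃ j : ℕ, R / 2 ^ (j + 1) < t ∧ t ≤ R / 2 ^ j := by
  have hR0 : 0 < R := ht.trans_le hR
  have hex : ∃ n : ℕ, R / 2 ^ (n + 1) < t := by
    obtain ⟨n, hn⟩ := pow_unbounded_of_one_lt (R / t) (by norm_num : (1:ℝ) < 2)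
    refine ⟨n, ?_⟩
    rw [div_lt_iff₀ (by positivity)]
    rw [div_lt_iff₀ ht] at hn
    calc R < 2 ^ n * t := hn
    _ ≤ t * 2 ^ (n + 1) := by
        have : (2:ℝ) ^ n ≤ 2 ^ (n+1) := by
          apply pow_le_pow_right₀ (by norm_num) (Nat.le_succ n)
        nlinarith [pow_pos (show (0:ℝ) < 2 by norm_num) n]
  classical
  refine ⟨Nat.find hex, Nat.find_spec hex, ?_⟩
  rcases Nat.eq_zero_or_pos (Nat.find hex) with h0 | h0
  · rw [h0]; simpa using hR
  · have hmin := Nat.find_min hex (Nat.sub_lt h0 one_pos)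
    have hj : Nat.find hex - 1 + 1 = Nat.find hex := Nat.succ_pred_eq_of_pos h0
    rw [hj] at hmin
    exact le_of_not_gt hmin

lemma exists_dyadic_up {ρ t : ℝ} (hρ : 0 < ρ) (h : ρ ≤ t) :
    ∃ j : ℕ, ρ * 2 ^ j ≤ t ∧ t < ρ * 2 ^ (j + 1) := by
  have hex : ∃ n : ℕ, t < ρ * 2 ^ (n + 1) := by
    obtain ⟨n, hn⟩ := pow_unbounded_of_one_lt (t / ρ) (by norm_num : (1:ℝ) < 2)
    refine ⟨n, ?_⟩
    rw [div_lt_iff₀ hρ] at hn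
    calc t < 2 ^ n * ρ := hn
    _ ≤ ρ * 2 ^ (n + 1) := by
        have : (2:ℝ) ^ n ≤ 2 ^ (n+1) := by
          apply pow_le_pow_right₀ (by norm_num) (Nat.le_succ n)
        nlinarith
  classical
  refine ⟨Nat.find hex, ?_, Nat.find_spec hex⟩
  rcases Nat.eq_zero_or_pos (Nat.find hex) with h0 | h0
  · rw [h0]; simpa using h
  · have hmin := Nat.find_min hex (Nat.sub_lt h0 one_pos)
    have hj : Nat.find hex - 1 + 1 = Nat.find hex := Nat.succ_pred_eq_of_pos h0
    rw [hj] at hmin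
    exact le_of_not_gt hmin

lemma two_pow_rpow (q : ℝ) (j : ℕ) : ((2:ℝ) ^ j) ^ q = ((2:ℝ) ^ q) ^ j := by
  rw [← Real.rpow_natCast (2:ℝ) j, ← Real.rpow_natCast ((2:ℝ) ^ q) j,
    ← Real.rpow_mul (by norm_num : (0:ℝ) ≤ 2), ← Real.rpow_mul (by norm_num : (0:ℝ) ≤ 2),
    mul_comm]

lemma div_pow_rpow {b : ℝ} (hb : 0 < b) (q : ℝ) (j : ℕ) :
    (b / 2 ^ j) ^ q = b ^ q * (((2:ℝ) ^ q)⁻¹) ^ j := by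
  rw [Real.div_rpow hb.le (by positivity), two_pow_rpow, div_eq_mul_inv, inv_pow]

lemma mul_pow_rpow {b : ℝ} (hb : 0 < b) (q : ℝ) (j : ℕ) :
    (b * 2 ^ j) ^ q = b ^ q * ((2:ℝ) ^ q) ^ j := by
  rw [Real.mul_rpow hb.le (by positivity), two_pow_rpow]

lemma two_pow_sq (j : ℕ) : (((2:ℝ) ^ j) ^ 2 : ℝ) = 4 ^ j := by
  rw [← pow_mul, mul_comm, pow_mul]; norm_num

lemma sq_div_pow (ρ : ℝ) (j : ℕ) : (ρ / 2 ^ j) ^ 2 = ρ ^ 2 * ((4:ℝ)⁻¹) ^ j := by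
  rw [div_pow, two_pow_sq, div_eq_mul_inv, inv_pow]

lemma rpow_mul_sq {r : ℝ} (hr : 0 < r) (a : ℝ) : r ^ a * r ^ (2:ℕ) = r ^ (a + 2) := by
  rw [← Real.rpow_natCast r 2, ← Real.rpow_add hr]
  norm_num

lemma geom_sum_eq {K w : ℝ} (hK : 0 ≤ K) (hw0 : 0 ≤ w) :
    ∑' j : ℕ, ENNReal.ofReal (K * w ^ j)
      = ENNReal.ofReal K * (1 - ENNReal.ofReal w)⁻¹ := by
  have : ∀ j : ℕ, ENNReal.ofReal (K * w ^ j)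
      = ENNReal.ofReal K * (ENNReal.ofReal w) ^ j := by
    intro j
    rw [ENNReal.ofReal_mul hK, ENNReal.ofReal_pow hw0]
  simp_rw [this]
  rw [ENNReal.tsum_mul_left, ENNReal.tsum_geometric]

lemma geom_inv_ne_top {w : ℝ} (hw1 : w < 1) : (1 - ENNReal.ofReal w)⁻¹ ≠ ∞ := by
  rw [ENNReal.inv_ne_top]
  exact (tsub_pos_of_lt (ENNReal.ofReal_lt_one.mpr hw1)).ne'

lemma volume_closedBall_le (x : ℝ × ℝ) {ρ : ℝ} (hρ : 0 ≤ ρ) :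
    volume (Metric.closedBall x ρ) ≤ ENNReal.ofReal (4 * ρ ^ 2) := by
  have h1 : Metric.closedBall x ρ = Metric.closedBall x.1 ρ ×ˢ Metric.closedBall x.2 ρ := by
    exact (closedBall_prod_same x.1 x.2 ρ).symm
  rw [h1, Measure.volume_eq_prod, Measure.prod_prod, Real.volume_closedBall, Real.volume_closedBall,
    ← ENNReal.ofReal_mul (by positivity)]
  apply ENNReal.ofReal_le_ofReal
  nlinarith

lemma closedBall_subset_EBall (x : ℝ × ℝ) {ρ : ℝ} (hρ : 0 < ρ) :
    Metric.closedBall x ρ ⊆ EBall x (2 * ρ) := by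
  intro y hy
  rw [Metric.mem_closedBall, Prod.dist_eq, max_le_iff, Real.dist_eq, Real.dist_eq] at hy
  obtain ⟨h1, h2⟩ := hy
  have e1 := abs_le.mp h1
  have e2 := abs_le.mp h2
  show (y.1 - x.1) ^ 2 + (y.2 - x.2) ^ 2 < (2 * ρ) ^ 2
  nlinarith [e1.1, e1.2, e2.1, e2.2]

lemma euclid_kernel_le {s : ℝ} (hs2 : s < 2) (x y : ℝ × ℝ) :
    ENNReal.ofReal (((x.1 - y.1) ^ 2 + (x.2 - y.2) ^ 2) ^ ((s - 2) / 2))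
      ≤ edist x y ^ (s - 2) := by
  rcases eq_or_ne x y with rfl | hxy
  · have : ((x.1 - x.1) ^ 2 + (x.2 - x.2) ^ 2 : ℝ) = 0 := by ring
    rw [this, Real.zero_rpow (ne_of_lt (by linarith))]
    · simp
  · have hd : 0 < dist x y := dist_pos.mpr hxy
    have hE : dist x y ^ (2:ℕ) ≤ (x.1 - y.1) ^ 2 + (x.2 - y.2) ^ 2 := by
      rw [Prod.dist_eq]
      rcases max_cases (dist x.1 y.1) (dist x.2 y.2) with ⟨he, _⟩ | ⟨he, _⟩ <;>
        rw [he, Real.dist_eq] <;> nlinarith [sq_abs (x.1 - y.1), sq_abs (x.2 - y.2),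
          sq_nonneg (x.1 - y.1), sq_nonneg (x.2 - y.2), abs_nonneg (x.1 - y.1),
          abs_nonneg (x.2 - y.2)]
    have h2 : ((x.1 - y.1) ^ 2 + (x.2 - y.2) ^ 2 : ℝ) ^ ((s - 2) / 2)
        ≤ (dist x y ^ (2:ℕ)) ^ ((s - 2) / 2) := by
      apply Real.rpow_le_rpow_of_nonpos (by positivity) hE (by linarith)
    have h3 : (dist x y ^ (2:ℕ) : ℝ) ^ ((s - 2) / 2) = dist x y ^ (s - 2) := by
      rw [← Real.rpow_natCast (dist x y) 2, ← Real.rpow_mul hd.le]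
      congr 1
      push_cast
      ring
    rw [edist_dist, ENNReal.ofReal_rpow_of_pos hd]
    exact ENNReal.ofReal_le_ofReal (h2.trans_eq h3)


lemma mu_singleton_eq_zero {μ : Measure (ℝ × ℝ)} {c α : ℝ} (hα : 0 < α)
    (hball : ∀ (x : ℝ × ℝ) (r : ℝ), 0 < r → μ (EBall x r) ≤ ENNReal.ofReal (c * r ^ α))
    (x' : ℝ × ℝ) : μ {x'} = 0 := by
  have key : ∀ r : ℝ, 0 < r → μ {x'} ≤ ENNReal.ofReal (c * r ^ α) := by
    intro r hr
    refine (measure_mono ?_).trans (hball x' r hr)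
    intro y hy
    rcases hy with rfl
    show (y.1 - y.1) ^ 2 + (y.2 - y.2) ^ 2 < r ^ 2
    have : ((y.1 - y.1) ^ 2 + (y.2 - y.2) ^ 2 : ℝ) = 0 := by ring
    rw [this]; positivity
  have hcont : ContinuousAt (fun r : ℝ => ENNReal.ofReal (c * r ^ α)) 0 := by
    apply ENNReal.continuous_ofReal.continuousAt.comp
    exact continuousAt_const.mul (Real.continuousAt_rpow_const 0 α (Or.inr hα.le))
  have h0 : ENNReal.ofReal (c * (0:ℝ) ^ α) = 0 := by
    rw [Real.zero_rpow hα.ne']; simp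
  have htend : Tendsto (fun r : ℝ => ENNReal.ofReal (c * r ^ α))
      (nhdsWithin 0 (Set.Ioi 0)) (nhds 0) := by
    rw [← h0]
    exact hcont.continuousWithinAt.tendsto
  have : μ {x'} ≤ 0 :=
    ge_of_tendsto htend (eventually_nhdsWithin_of_forall (fun r hr => key r hr))
  exact le_antisymm this (zero_le)

lemma energy (s α : ℝ) (hs : 0 < s) (hs' : s < 1) (hα : 2 - 2 * s < α) {D : ℝ} (hD : 0 < D) :
    ∃ B : ℝ≥0∞, B ≠ ∞ ∧ ∀ (μ : Measure (ℝ × ℝ)) (c : ℝ), 0 ≤ c →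
      (∀ (x : ℝ × ℝ) (r : ℝ), 0 < r → μ (EBall x r) ≤ ENNReal.ofReal (c * r ^ α)) →
      ∀ x' : ℝ × ℝ, (∀ᵐ x ∂μ, dist x x' ≤ D) →
      ∫⁻ x, edist x x' ^ (2 * s - 2) ∂μ ≤ B * ENNReal.ofReal c := by
  have hα0 : 0 < α := by linarith
  set q : ℝ := 2 * s - 2 with hq
  set θ : ℝ := α + 2 * s - 2 with hθ
  have hθ0 : 0 < θ := by simp only [hθ]; linarith
  set w : ℝ := (2:ℝ) ^ (-θ) with hw
  have hw0 : 0 < w := Real.rpow_pos_of_pos (by norm_num) _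
  have hw1 : w < 1 := Real.rpow_lt_one_of_one_lt_of_neg (by norm_num) (by linarith)
  set K0 : ℝ := (D / 2) ^ q * (2 * D) ^ α with hK0
  have hK0n : 0 ≤ K0 := by positivity
  refine ⟨ENNReal.ofReal K0 * (1 - ENNReal.ofReal w)⁻¹,
    ENNReal.mul_ne_top ENNReal.ofReal_ne_top (geom_inv_ne_top hw1), ?_⟩
  intro μ c hc hball x' hae
  have hsing : μ {x'} = 0 := mu_singleton_eq_zero hα0 hball x'
  have hne : ∀ᵐ x ∂μ, x ≠ x' := by
    rw [ae_iff]
    convert hsing using 2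
    ext z; simp
  -- dyadic decomposition
  set S : ℕ → Set (ℝ × ℝ) := fun j => Metric.closedBall x' (D / 2 ^ j) with hS
  set a : ℕ → ℝ≥0∞ := fun j => ENNReal.ofReal ((D / 2 / 2 ^ j) ^ q) with ha
  have hstep : ∫⁻ x, edist x x' ^ q ∂μ ≤ ∑' j, a j * μ (S j) := by
    apply dyadic_le
    · intro j; exact Metric.isClosed_closedBall.measurableSet
    · filter_upwards [hae, hne] with x hxD hxne
      have hd0 : 0 < dist x x' := dist_pos.mpr hxne
      obtain ⟨j, hj1, hj2⟩ := exists_dyadic_down hd0 hxD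
      refine ⟨j, hj2, ?_⟩
      have heq : D / 2 ^ (j + 1) = D / 2 / 2 ^ j := by
        rw [pow_succ]; ring
      rw [edist_dist, ENNReal.ofReal_rpow_of_pos hd0]
      apply ENNReal.ofReal_le_ofReal
      apply Real.rpow_le_rpow_of_nonpos (by rw [← heq]; positivity) (by rw [← heq]; exact hj1.le)
      simp only [hq]; linarith
  refine hstep.trans ?_
  have hterm : ∀ j : ℕ, a j * μ (S j) ≤ ENNReal.ofReal (K0 * c * w ^ j) := by
    intro j
    have hρ : 0 < D / 2 ^ j := by positivity
    have hμS : μ (S j) ≤ ENNReal.ofReal (c * (2 * (D / 2 ^ j)) ^ α) := by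
      refine (measure_mono (closedBall_subset_EBall x' hρ)).trans (hball x' _ (by positivity))
    calc a j * μ (S j) ≤ ENNReal.ofReal ((D / 2 / 2 ^ j) ^ q) *
        ENNReal.ofReal (c * (2 * (D / 2 ^ j)) ^ α) := mul_le_mul_right hμS _
    _ = ENNReal.ofReal ((D / 2 / 2 ^ j) ^ q * (c * (2 * (D / 2 ^ j)) ^ α)) := by
        rw [← ENNReal.ofReal_mul (by positivity)]
    _ = ENNReal.ofReal (K0 * c * w ^ j) := by
        congr 1
        have h1 : (D / 2 / 2 ^ j : ℝ) ^ q = (D / 2) ^ q * (((2:ℝ) ^ q)⁻¹) ^ j :=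
          div_pow_rpow (by positivity) q j
        have h2 : (2 * (D / 2 ^ j) : ℝ) = (2 * D) / 2 ^ j := by ring
        have h3 : ((2 * D) / 2 ^ j : ℝ) ^ α = (2 * D) ^ α * (((2:ℝ) ^ α)⁻¹) ^ j :=
          div_pow_rpow (by positivity) α j
        have h4 : w ^ j = (((2:ℝ) ^ q)⁻¹) ^ j * (((2:ℝ) ^ α)⁻¹) ^ j := by
          rw [← mul_pow]
          congr 1
          rw [hw, ← Real.rpow_neg (by norm_num : (0:ℝ) ≤ 2),
            ← Real.rpow_neg (by norm_num : (0:ℝ) ≤ 2),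
            ← Real.rpow_add (by norm_num : (0:ℝ) < 2)]
          congr 1
          simp only [hθ, hq]; ring
        rw [h1, h2, h3, h4, hK0]
        ring
  refine (ENNReal.tsum_le_tsum hterm).trans ?_
  rw [geom_sum_eq (by positivity) hw0.le]
  rw [ENNReal.ofReal_mul hK0n]
  ring_nf
  exact le_of_eq (by ring)


lemma volume_singleton_pair (x : ℝ × ℝ) : volume ({x} : Set (ℝ × ℝ)) = 0 := by
  refine le_antisymm ?_ (zero_le)
  have h1 : ({x} : Set (ℝ × ℝ)) ⊆ Metric.closedBall x 0 := by
    intro y hy; rcases hy with rfl; simp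
  refine (measure_mono h1).trans ?_
  simpa using volume_closedBall_le x le_rfl

lemma regionA (s : ℝ) (hs : 0 < s) (hs' : s < 1) :
    ∃ CA : ℝ≥0∞, CA ≠ ∞ ∧ ∀ x x' : ℝ × ℝ, 0 < dist x x' →
      ∫⁻ y in Metric.closedBall x (dist x x' / 2),
          edist x y ^ (s - 2) * edist x' y ^ (s - 2) ∂volume
        ≤ CA * ENNReal.ofReal (dist x x' ^ (2 * s - 2)) := by
  set q : ℝ := s - 2 with hq
  set w : ℝ := ((2:ℝ) ^ q)⁻¹ * 4⁻¹ with hw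
  have h2q : (0:ℝ) < (2:ℝ) ^ q := Real.rpow_pos_of_pos (by norm_num) _
  have hw0 : 0 < w := by positivity
  have h4 : (2:ℝ) ^ ((2:ℕ):ℝ) = 4 := by rw [Real.rpow_natCast]; norm_num
  have hw1 : w < 1 := by
    have hlt : ((2:ℝ) ^ q)⁻¹ < 4 := by
      rw [← Real.rpow_neg (by norm_num : (0:ℝ) ≤ 2), ← h4]
      apply Real.rpow_lt_rpow_of_exponent_lt (by norm_num)
      push_cast
      simp only [hq]; linarith
    calc w = ((2:ℝ) ^ q)⁻¹ * 4⁻¹ := hw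
    _ < 4 * 4⁻¹ := by apply mul_lt_mul_of_pos_right hlt; norm_num
    _ = 1 := by norm_num
  set KA : ℝ := (4⁻¹:ℝ) ^ q * (2⁻¹:ℝ) ^ q * (4 * ((2:ℝ)⁻¹) ^ (2:ℕ)) with hKA
  have hKA0 : 0 ≤ KA := by positivity
  refine ⟨ENNReal.ofReal KA * (1 - ENNReal.ofReal w)⁻¹,
    ENNReal.mul_ne_top ENNReal.ofReal_ne_top (geom_inv_ne_top hw1), ?_⟩
  intro x x' hr
  set r := dist x x' with hrdef
  set ρ := r / 2 with hρdef
  have hρ : 0 < ρ := by positivity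
  set B : Set (ℝ × ℝ) := Metric.closedBall x ρ with hB
  set S : ℕ → Set (ℝ × ℝ) := fun j => Metric.closedBall x (ρ / 2 ^ j) with hS
  set a : ℕ → ℝ≥0∞ := fun j => ENNReal.ofReal ((ρ / 2 / 2 ^ j) ^ q * ρ ^ q) with ha
  have hstep : ∫⁻ y in B, edist x y ^ q * edist x' y ^ q ∂volume
      ≤ ∑' j, a j * (volume.restrict B) (S j) := by
    apply dyadic_le
    · intro j; exact Metric.isClosed_closedBall.measurableSet
    · have hmem : ∀ᵐ y ∂(volume.restrict B), y ∈ B :=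
        ae_restrict_mem Metric.isClosed_closedBall.measurableSet
      have hne : ∀ᵐ y ∂(volume.restrict B), y ≠ x := by
        refine ae_restrict_of_ae ?_
        rw [ae_iff]
        refine le_antisymm (le_trans (measure_mono ?_) (volume_singleton_pair x).le) (zero_le)
        intro y hy; simpa using hy
      filter_upwards [hmem, hne] with y hyB hyx
      have hd1 : 0 < dist x y := dist_pos.mpr (Ne.symm hyx)
      have hd1ρ : dist x y ≤ ρ := by rw [dist_comm]; exact hyB
      obtain ⟨j, hj1, hj2⟩ := exists_dyadic_down hd1 hd1ρ
      have heq : ρ / 2 ^ (j + 1) = ρ / 2 / 2 ^ j := by rw [pow_succ]; ring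
      refine ⟨j, by rw [hS]; simp only [Metric.mem_closedBall]; rw [dist_comm]; exact hj2, ?_⟩
      have hd2 : ρ ≤ dist x' y := by
        have ht : dist x x' ≤ dist x y + dist y x' := dist_triangle x y x'
        rw [dist_comm x' y]
        have hr' : r = dist x x' := hrdef
        linarith
      have hd2' : 0 < dist x' y := lt_of_lt_of_le hρ hd2
      have hb1 : 0 < ρ / 2 / 2 ^ j := by positivity
      rw [edist_dist, edist_dist, ENNReal.ofReal_rpow_of_pos hd1,
        ENNReal.ofReal_rpow_of_pos hd2']
      calc ENNReal.ofReal (dist x y ^ q) * ENNReal.ofReal (dist x' y ^ q)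
          ≤ ENNReal.ofReal ((ρ / 2 / 2 ^ j) ^ q) * ENNReal.ofReal (ρ ^ q) := by
            apply mul_le_mul'
            · apply ENNReal.ofReal_le_ofReal
              apply Real.rpow_le_rpow_of_nonpos hb1 (by rw [← heq]; exact hj1.le)
              simp only [hq]; linarith
            · apply ENNReal.ofReal_le_ofReal
              apply Real.rpow_le_rpow_of_nonpos hρ hd2 (by simp only [hq]; linarith)
      _ = a j := by simp only [ha]; rw [ENNReal.ofReal_mul (by positivity)]
  refine hstep.trans ?_
  have hterm : ∀ j : ℕ, a j * (volume.restrict B) (S j)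
      ≤ ENNReal.ofReal (KA * r ^ (2 * s - 2) * w ^ j) := by
    intro j
    have hvol : (volume.restrict B) (S j) ≤ ENNReal.ofReal (4 * (ρ / 2 ^ j) ^ 2) := by
      rw [Measure.restrict_apply Metric.isClosed_closedBall.measurableSet]
      exact (measure_mono Set.inter_subset_left).trans
        (volume_closedBall_le x (by positivity))
    calc a j * (volume.restrict B) (S j)
        ≤ ENNReal.ofReal ((ρ / 2 / 2 ^ j) ^ q * ρ ^ q) *
          ENNReal.ofReal (4 * (ρ / 2 ^ j) ^ 2) := mul_le_mul_right hvol _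
    _ = ENNReal.ofReal ((ρ / 2 / 2 ^ j) ^ q * ρ ^ q * (4 * (ρ / 2 ^ j) ^ 2)) := by
        rw [← ENNReal.ofReal_mul (by positivity)]
    _ = ENNReal.ofReal (KA * r ^ (2 * s - 2) * w ^ j) := by
        congr 1
        have h1 : (ρ / 2 / 2 ^ j : ℝ) ^ q = (ρ / 2) ^ q * (((2:ℝ) ^ q)⁻¹) ^ j :=
          div_pow_rpow (by positivity) q j
        have h2 : (ρ / 2 ^ j : ℝ) ^ 2 = ρ ^ 2 * ((4:ℝ)⁻¹) ^ j := sq_div_pow ρ j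
        have h3 : (ρ / 2 : ℝ) ^ q = r ^ q * ((4:ℝ)⁻¹) ^ q := by
          rw [hρdef, show (r / 2 / 2 : ℝ) = r * 4⁻¹ by ring,
            Real.mul_rpow dist_nonneg (by norm_num)]
        have h4' : (ρ : ℝ) ^ q = r ^ q * ((2:ℝ)⁻¹) ^ q := by
          rw [hρdef, show (r / 2 : ℝ) = r * 2⁻¹ by ring,
            Real.mul_rpow dist_nonneg (by norm_num)]
        have h5 : (ρ : ℝ) ^ (2:ℕ) = r ^ (2:ℕ) * ((2:ℝ)⁻¹) ^ (2:ℕ) := by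
          rw [hρdef, show (r / 2 : ℝ) = r * 2⁻¹ by ring, mul_pow]
        have h6 : r ^ q * r ^ q * r ^ (2:ℕ) = r ^ (2 * s - 2) := by
          rw [← Real.rpow_add hr, rpow_mul_sq hr]
          congr 1
          simp only [hq]; ring
        have h7 : w ^ j = (((2:ℝ) ^ q)⁻¹) ^ j * ((4:ℝ)⁻¹) ^ j := by
          rw [hw, mul_pow]
        rw [h1, h2, h3, h4', h5, h7, hKA, ← h6]
        ring
  refine (ENNReal.tsum_le_tsum hterm).trans ?_
  rw [geom_sum_eq (by positivity) hw0.le, ENNReal.ofReal_mul hKA0]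
  exact le_of_eq (by ring)

lemma regionB (s : ℝ) (hs : 0 < s) (hs' : s < 1) :
    ∃ CB : ℝ≥0∞, CB ≠ ∞ ∧ ∀ x x' : ℝ × ℝ, 0 < dist x x' →
      ∫⁻ y in {y : ℝ × ℝ | dist x x' / 2 ≤ dist x y ∧ dist x x' / 2 ≤ dist x' y},
          edist x y ^ (s - 2) * edist x' y ^ (s - 2) ∂volume
        ≤ CB * ENNReal.ofReal (dist x x' ^ (2 * s - 2)) := by
  set q : ℝ := s - 2 with hq
  set w : ℝ := (2:ℝ) ^ q * (2:ℝ) ^ q * 4 with hw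
  have h2q : (0:ℝ) < (2:ℝ) ^ q := Real.rpow_pos_of_pos (by norm_num) _
  have hw0 : 0 < w := by positivity
  have h4 : (2:ℝ) ^ ((2:ℕ):ℝ) = 4 := by rw [Real.rpow_natCast]; norm_num
  have hweq : w = (2:ℝ) ^ (2 * s - 2) := by
    rw [hw, ← Real.rpow_add (by norm_num : (0:ℝ) < 2), ← h4,
      ← Real.rpow_add (by norm_num : (0:ℝ) < 2)]
    congr 1
    push_cast
    simp only [hq]; ring
  have hw1 : w < 1 := by
    rw [hweq]
    exact Real.rpow_lt_one_of_one_lt_of_neg (by norm_num) (by linarith)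
  set KB : ℝ := (2⁻¹:ℝ) ^ q * (8⁻¹:ℝ) ^ q * 4 with hKB
  have hKB0 : 0 ≤ KB := by positivity
  refine ⟨ENNReal.ofReal KB * (1 - ENNReal.ofReal w)⁻¹,
    ENNReal.mul_ne_top ENNReal.ofReal_ne_top (geom_inv_ne_top hw1), ?_⟩
  intro x x' hr
  set r := dist x x' with hrdef
  set ρ := r / 2 with hρdef
  have hρ : 0 < ρ := by positivity
  set B : Set (ℝ × ℝ) := {y : ℝ × ℝ | ρ ≤ dist x y ∧ ρ ≤ dist x' y} with hB
  have hBmeas : MeasurableSet B := by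
    apply MeasurableSet.inter
    · exact measurableSet_le measurable_const (continuous_const.dist continuous_id).measurable
    · exact measurableSet_le measurable_const (continuous_const.dist continuous_id).measurable
  set S : ℕ → Set (ℝ × ℝ) := fun j => Metric.closedBall x (ρ * 2 ^ (j + 1)) with hS
  set a : ℕ → ℝ≥0∞ := fun j =>
    ENNReal.ofReal ((ρ * 2 ^ j) ^ q * (ρ * 2 ^ j / 4) ^ q) with ha
  have hstep : ∫⁻ y in B, edist x y ^ q * edist x' y ^ q ∂volume
      ≤ ∑' j, a j * (volume.restrict B) (S j) := by
    apply dyadic_le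
    · intro j; exact Metric.isClosed_closedBall.measurableSet
    · filter_upwards [ae_restrict_mem hBmeas] with y hyB
      obtain ⟨hy1, hy2⟩ := hyB
      have hd1 : 0 < dist x y := lt_of_lt_of_le hρ hy1
      have hd2 : 0 < dist x' y := lt_of_lt_of_le hρ hy2
      have hd24 : dist x y / 4 ≤ dist x' y := by
        rcases le_or_gt (dist x y) (2 * r) with hc | hc
        · linarith
        · have ht : dist x y ≤ r + dist x' y := dist_triangle x x' y
          linarith
      obtain ⟨j, hj1, hj2⟩ := exists_dyadic_up hρ hy1
      refine ⟨j, by rw [hS]; simp only [Metric.mem_closedBall]; rw [dist_comm]; exact hj2.le, ?_⟩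
      rw [edist_dist, edist_dist, ENNReal.ofReal_rpow_of_pos hd1,
        ENNReal.ofReal_rpow_of_pos hd2]
      calc ENNReal.ofReal (dist x y ^ q) * ENNReal.ofReal (dist x' y ^ q)
          ≤ ENNReal.ofReal ((ρ * 2 ^ j) ^ q) * ENNReal.ofReal ((ρ * 2 ^ j / 4) ^ q) := by
            apply mul_le_mul'
            · exact ENNReal.ofReal_le_ofReal
                (Real.rpow_le_rpow_of_nonpos (by positivity) hj1 (by simp only [hq]; linarith))
            · apply ENNReal.ofReal_le_ofReal
              apply Real.rpow_le_rpow_of_nonpos (by positivity)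
                (le_trans (by linarith) hd24) (by simp only [hq]; linarith)
      _ = a j := by simp only [ha]; rw [ENNReal.ofReal_mul (by positivity)]
  refine hstep.trans ?_
  have hterm : ∀ j : ℕ, a j * (volume.restrict B) (S j)
      ≤ ENNReal.ofReal (KB * r ^ (2 * s - 2) * w ^ j) := by
    intro j
    have hvol : (volume.restrict B) (S j) ≤ ENNReal.ofReal (4 * (ρ * 2 ^ (j + 1)) ^ 2) := by
      rw [Measure.restrict_apply' hBmeas]
      exact (measure_mono Set.inter_subset_left).trans
        (volume_closedBall_le x (by positivity))
    calc a j * (volume.restrict B) (S j)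
        ≤ ENNReal.ofReal ((ρ * 2 ^ j) ^ q * (ρ * 2 ^ j / 4) ^ q) *
          ENNReal.ofReal (4 * (ρ * 2 ^ (j + 1)) ^ 2) := mul_le_mul_right hvol _
    _ = ENNReal.ofReal ((ρ * 2 ^ j) ^ q * (ρ * 2 ^ j / 4) ^ q *
          (4 * (ρ * 2 ^ (j + 1)) ^ 2)) := by
        rw [← ENNReal.ofReal_mul (by positivity)]
    _ = ENNReal.ofReal (KB * r ^ (2 * s - 2) * w ^ j) := by
        congr 1
        have h1 : (ρ * 2 ^ j : ℝ) ^ q = ρ ^ q * ((2:ℝ) ^ q) ^ j :=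
          mul_pow_rpow hρ q j
        have h2 : (ρ * 2 ^ j / 4 : ℝ) ^ q = (ρ / 4) ^ q * ((2:ℝ) ^ q) ^ j := by
          rw [show (ρ * 2 ^ j / 4 : ℝ) = (ρ / 4) * 2 ^ j by ring]
          exact mul_pow_rpow (by positivity) q j
        have h3 : ((ρ * 2 ^ (j + 1) : ℝ)) ^ (2:ℕ) = (2 * ρ) ^ (2:ℕ) * (4:ℝ) ^ j := by
          rw [show (ρ * 2 ^ (j + 1) : ℝ) = (2 * ρ) * 2 ^ j by rw [pow_succ]; ring,
            mul_pow, two_pow_sq]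
        have h4' : (ρ : ℝ) ^ q = r ^ q * ((2:ℝ)⁻¹) ^ q := by
          rw [hρdef, show (r / 2 : ℝ) = r * 2⁻¹ by ring,
            Real.mul_rpow dist_nonneg (by norm_num)]
        have h5 : (ρ / 4 : ℝ) ^ q = r ^ q * ((8:ℝ)⁻¹) ^ q := by
          rw [hρdef, show (r / 2 / 4 : ℝ) = r * 8⁻¹ by ring,
            Real.mul_rpow dist_nonneg (by norm_num)]
        have h6 : (2 * ρ : ℝ) ^ (2:ℕ) = r ^ (2:ℕ) := by
          rw [hρdef]; ring
        have h7 : r ^ q * r ^ q * r ^ (2:ℕ) = r ^ (2 * s - 2) := by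
          rw [← Real.rpow_add hr, rpow_mul_sq hr]
          congr 1
          simp only [hq]; ring
        have h8 : w ^ j = ((2:ℝ) ^ q) ^ j * ((2:ℝ) ^ q) ^ j * (4:ℝ) ^ j := by
          rw [hw, mul_pow, mul_pow]
        rw [h1, h2, h3, h4', h5, h6, h8, hKB, ← h7]
        ring
  refine (ENNReal.tsum_le_tsum hterm).trans ?_
  rw [geom_sum_eq (by positivity) hw0.le, ENNReal.ofReal_mul hKB0]
  exact le_of_eq (by ring)

lemma comp (s : ℝ) (hs : 0 < s) (hs' : s < 1) :
    ∃ A : ℝ≥0∞, A ≠ ∞ ∧ ∀ x x' : ℝ × ℝ,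
      ∫⁻ y, edist x y ^ (s - 2) * edist x' y ^ (s - 2) ∂volume
        ≤ A * edist x x' ^ (2 * s - 2) := by
  obtain ⟨CA, hCA, hA⟩ := regionA s hs hs'
  obtain ⟨CB, hCB, hBnd⟩ := regionB s hs hs'
  refine ⟨CA + CA + CB + 1,
    ENNReal.add_ne_top.mpr ⟨ENNReal.add_ne_top.mpr ⟨ENNReal.add_ne_top.mpr ⟨hCA, hCA⟩, hCB⟩,
      ENNReal.one_ne_top⟩, ?_⟩
  intro x x'
  rcases eq_or_ne x x' with rfl | hxx
  · have hinf : edist x x ^ (2 * s - 2) = ∞ := by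
      rw [edist_self, ENNReal.zero_rpow_of_neg (by linarith)]
    rw [hinf, ENNReal.mul_top (by simp)]
    exact le_top
  · have hr : 0 < dist x x' := dist_pos.mpr hxx
    set r := dist x x' with hrdef
    set ρ := r / 2 with hρdef
    set B1 : Set (ℝ × ℝ) := Metric.closedBall x ρ with hB1
    set B2 : Set (ℝ × ℝ) := Metric.closedBall x' ρ with hB2
    set B3 : Set (ℝ × ℝ) := {y : ℝ × ℝ | ρ ≤ dist x y ∧ ρ ≤ dist x' y} with hB3
    set f : ℝ × ℝ → ℝ≥0∞ := fun y => edist x y ^ (s - 2) * edist x' y ^ (s - 2) with hf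
    have hE : edist x x' ^ (2 * s - 2) = ENNReal.ofReal (r ^ (2 * s - 2)) := by
      rw [edist_dist, ENNReal.ofReal_rpow_of_pos hr]
    have hcover : (Set.univ : Set (ℝ × ℝ)) ⊆ B1 ∪ (B2 ∪ B3) := by
      intro y _
      rcases le_or_gt (dist x y) ρ with h1 | h1
      · exact Or.inl (by rwa [Metric.mem_closedBall, dist_comm])
      · rcases le_or_gt (dist x' y) ρ with h2 | h2
        · exact Or.inr (Or.inl (by rwa [Metric.mem_closedBall, dist_comm]))
        · exact Or.inr (Or.inr ⟨h1.le, h2.le⟩)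
    have hB2bound : ∫⁻ y in B2, f y ∂volume ≤ CA * ENNReal.ofReal (r ^ (2 * s - 2)) := by
      have := hA x' x (by rwa [dist_comm])
      rw [dist_comm x' x] at this
      refine le_trans (le_of_eq ?_) this
      apply lintegral_congr
      intro y
      rw [hf, mul_comm]
    calc ∫⁻ y, f y ∂volume = ∫⁻ y in Set.univ, f y ∂volume := (setLIntegral_univ _).symm
    _ ≤ ∫⁻ y in B1 ∪ (B2 ∪ B3), f y ∂volume := lintegral_mono_set hcover
    _ ≤ ∫⁻ y in B1, f y ∂volume + ∫⁻ y in B2 ∪ B3, f y ∂volume := lintegral_union_le _ _ _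
    _ ≤ ∫⁻ y in B1, f y ∂volume + (∫⁻ y in B2, f y ∂volume + ∫⁻ y in B3, f y ∂volume) :=
        add_le_add_right (lintegral_union_le _ _ _) _
    _ ≤ CA * ENNReal.ofReal (r ^ (2 * s - 2)) + (CA * ENNReal.ofReal (r ^ (2 * s - 2))
          + CB * ENNReal.ofReal (r ^ (2 * s - 2))) := by
        gcongr <;>
          first
            | exact hA x x' hr
            | exact hB2bound
            | exact hBnd x x' hr
    _ = (CA + CA + CB) * ENNReal.ofReal (r ^ (2 * s - 2)) := by ring
    _ ≤ (CA + CA + CB + 1) * ENNReal.ofReal (r ^ (2 * s - 2)) :=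
        mul_le_mul_left (self_le_add_right _ 1) _
    _ = (CA + CA + CB + 1) * edist x x' ^ (2 * s - 2) := by rw [hE]

end Stmt8Aux


set_option maxHeartbeats 1000000 in
/-- the elementary inequality (element0) of Section 4. Let
`0 < s < 1`, `2 - 2s < α ≤ 2` and let `Ω ⊆ ℝ²` be bounded. There is `C = C(s, α, Ω)`
such that for every α-dimensional Borel probability measure `μ` with constant `c`
supported in `Ω` and every `g ∈ L²(ℝ²)`,
`∫ (∫ |x-y|^{s-2} |g(y)| dy) dμ(x) ≤ C √c ‖g‖_{L²}`. -/
theorem stmt8 (s α : ℝ) (hs : 0 < s) (hs' : s < 1) (hα : 2 - 2 * s < α) (hα' : α ≤ 2)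
    (Ω : Set (ℝ × ℝ)) (hΩ : Bornology.IsBounded Ω) :
    ∃ C : ℝ, 0 < C ∧
      ∀ (μ : Measure (ℝ × ℝ)) (_ : IsProbabilityMeasure μ) (c : ℝ), 0 ≤ c →
        μ Ωᶜ = 0 →
        (∀ (x : ℝ × ℝ) (r : ℝ), 0 < r → μ (EBall x r) ≤ ENNReal.ofReal (c * r ^ α)) →
        ∀ g : ℝ × ℝ → ℂ, MemLp g 2 volume →
          (∫⁻ x, (∫⁻ y,
              ENNReal.ofReal (((x.1 - y.1) ^ 2 + (x.2 - y.2) ^ 2) ^ ((s - 2) / 2)) *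
                (‖g y‖₊ : ℝ≥0∞) ∂volume) ∂μ) ≤
            ENNReal.ofReal (C * Real.sqrt c) * eLpNorm g 2 volume := by
  classical
  rcases Set.eq_empty_or_nonempty Ω with hΩe | ⟨x₀, hx₀⟩
  · refine ⟨1, one_pos, ?_⟩
    intro μ hμ c hc hμΩ hball g hg
    exfalso
    have h1 : μ Set.univ = 0 := by
      rw [hΩe, Set.compl_empty] at hμΩ
      exact hμΩ
    rw [measure_univ] at h1
    exact one_ne_zero h1
  · set D : ℝ := Metric.diam Ω + 1 with hD
    have hD0 : 0 < D := by
      have := Metric.diam_nonneg (s := Ω)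
      simp only [hD]; linarith
    have hdist : ∀ x ∈ Ω, ∀ x' ∈ Ω, dist x x' ≤ D := fun x hx x' hx' =>
      (Metric.dist_le_diam_of_mem hΩ hx hx').trans (by simp only [hD]; linarith)
    obtain ⟨B, hBt, hB⟩ := Stmt8Aux.energy s α hs hs' hα hD0
    obtain ⟨A, hAt, hAc⟩ := Stmt8Aux.comp s hs hs'
    set K := A * B with hK
    have hKt : K ≠ ∞ := ENNReal.mul_ne_top hAt hBt
    refine ⟨K.toReal + 1, by positivity, ?_⟩
    intro μ hμ c hc hμΩ hball g hg
    set c' := ENNReal.ofReal c with hc'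
    set G : ℝ × ℝ → ℝ≥0∞ := fun y => (‖g y‖₊ : ℝ≥0∞) with hG
    have hGm : AEMeasurable G volume := hg.aestronglyMeasurable.enorm
    have hκm : Measurable (fun p : (ℝ × ℝ) × (ℝ × ℝ) => edist p.1 p.2 ^ (s - 2)) :=
      (ENNReal.continuous_rpow_const.comp continuous_edist).measurable
    have hsec : ∀ y : ℝ × ℝ, Measurable (fun x : ℝ × ℝ => edist x y ^ (s - 2)) := fun y =>
      hκm.comp (measurable_id.prodMk measurable_const)
    set F : ℝ × ℝ → ℝ≥0∞ := fun y => ∫⁻ x, edist x y ^ (s - 2) ∂μ with hF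
    have hFm : Measurable F := hκm.lintegral_prod_left'
    -- step 1 : kernel comparison
    have step1 : (∫⁻ x, (∫⁻ y,
          ENNReal.ofReal (((x.1 - y.1) ^ 2 + (x.2 - y.2) ^ 2) ^ ((s - 2) / 2)) *
            G y ∂volume) ∂μ)
        ≤ ∫⁻ x, (∫⁻ y, edist x y ^ (s - 2) * G y ∂volume) ∂μ :=
      lintegral_mono fun x => lintegral_mono fun y =>
        mul_le_mul_left (Stmt8Aux.euclid_kernel_le (by linarith) x y) _
    -- step 2 : Fubini
    have hkg_meas : AEMeasurable
        (fun p : (ℝ × ℝ) × (ℝ × ℝ) => edist p.1 p.2 ^ (s - 2) * G p.2) (μ.prod volume) :=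
      hκm.aemeasurable.mul
        (hGm.comp_quasiMeasurePreserving Measure.quasiMeasurePreserving_snd)
    have step2 : ∫⁻ x, (∫⁻ y, edist x y ^ (s - 2) * G y ∂volume) ∂μ
        = ∫⁻ y, F y * G y ∂volume := by
      rw [lintegral_lintegral_swap hkg_meas]
      exact lintegral_congr fun y => lintegral_mul_const (G y) (hsec y)
    -- step 3 : Cauchy-Schwarz
    have hpq : (2:ℝ).HolderConjugate 2 := Real.holderConjugate_iff.mpr ⟨by norm_num, by norm_num⟩
    have step3 := ENNReal.lintegral_mul_le_Lp_mul_Lq volume hpq hFm.aemeasurable hGm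
    -- G part is the L² norm
    have hGnorm : (∫⁻ y, G y ^ (2:ℝ) ∂volume) ^ (1/(2:ℝ)) = eLpNorm g 2 volume := by
      rw [eLpNorm_eq_lintegral_rpow_enorm_toReal (by norm_num) (by norm_num)]
      norm_num
      rfl
    -- F squared
    have hFsq : ∀ y, F y ^ (2:ℝ)
        = ∫⁻ p : (ℝ × ℝ) × (ℝ × ℝ),
            edist p.1 y ^ (s - 2) * edist p.2 y ^ (s - 2) ∂(μ.prod μ) := by
      intro y
      rw [show (2:ℝ) = ((2:ℕ):ℝ) by norm_num, ENNReal.rpow_natCast, sq, hF]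
      exact (lintegral_prod_mul (hsec y).aemeasurable (hsec y).aemeasurable).symm
    have hkk_meas : AEMeasurable
        (fun z : (ℝ × ℝ) × ((ℝ × ℝ) × (ℝ × ℝ)) =>
          edist z.2.1 z.1 ^ (s - 2) * edist z.2.2 z.1 ^ (s - 2))
        (volume.prod (μ.prod μ)) := by
      apply Measurable.aemeasurable
      apply Measurable.mul
      · exact hκm.comp ((measurable_snd.fst).prodMk measurable_fst)
      · exact hκm.comp ((measurable_snd.snd).prodMk measurable_fst)
    have step6 : ∫⁻ y, F y ^ (2:ℝ) ∂volume
        = ∫⁻ p : (ℝ × ℝ) × (ℝ × ℝ),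
            (∫⁻ y, edist p.1 y ^ (s - 2) * edist p.2 y ^ (s - 2) ∂volume) ∂(μ.prod μ) := by
      simp_rw [hFsq]
      exact lintegral_lintegral_swap hkk_meas
    have hmeas2 : Measurable (fun p : (ℝ × ℝ) × (ℝ × ℝ) => edist p.1 p.2 ^ (2 * s - 2)) :=
      (ENNReal.continuous_rpow_const.comp continuous_edist).measurable
    have step7 : ∫⁻ p : (ℝ × ℝ) × (ℝ × ℝ),
          (∫⁻ y, edist p.1 y ^ (s - 2) * edist p.2 y ^ (s - 2) ∂volume) ∂(μ.prod μ)
        ≤ ∫⁻ p : (ℝ × ℝ) × (ℝ × ℝ), A * edist p.1 p.2 ^ (2 * s - 2) ∂(μ.prod μ) :=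
      lintegral_mono fun p => hAc p.1 p.2
    have haeΩ : ∀ᵐ x ∂μ, x ∈ Ω := by
      rw [ae_iff]
      exact hμΩ
    have step8 : ∫⁻ p : (ℝ × ℝ) × (ℝ × ℝ), A * edist p.1 p.2 ^ (2 * s - 2) ∂(μ.prod μ)
        ≤ A * (B * c') := by
      rw [lintegral_const_mul _ hmeas2]
      apply mul_le_mul_right
      rw [lintegral_prod _ hmeas2.aemeasurable]
      calc ∫⁻ x, (∫⁻ x', edist x x' ^ (2 * s - 2) ∂μ) ∂μ
          ≤ ∫⁻ _x, B * c' ∂μ := by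
            apply lintegral_mono_ae
            filter_upwards [haeΩ] with x hx
            have hae' : ∀ᵐ x'' ∂μ, dist x'' x ≤ D := by
              filter_upwards [haeΩ] with x'' hx''
              exact hdist x'' hx'' x hx
            have hEb := hB μ c hc hball x hae'
            refine le_trans (le_of_eq ?_) hEb
            exact lintegral_congr fun x' => by rw [edist_comm]
      _ = B * c' := by rw [lintegral_const, measure_univ, mul_one]
    -- conclusion
    have hFbound : (∫⁻ y, F y ^ (2:ℝ) ∂volume) ^ (1/(2:ℝ)) ≤ (K * c') ^ (1/(2:ℝ)) := by
      apply ENNReal.rpow_le_rpow _ (by norm_num)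
      rw [step6, hK, mul_assoc]
      exact step7.trans step8
    have hfinal : (K * c') ^ (1/(2:ℝ)) ≤ ENNReal.ofReal ((K.toReal + 1) * Real.sqrt c) := by
      set C0 : ℝ := K.toReal + 1 with hC0
      have hC1 : 1 ≤ C0 := by
        have := ENNReal.toReal_nonneg (a := K)
        simp only [hC0]; linarith
      have hKle : K ≤ ENNReal.ofReal C0 := by
        calc K = ENNReal.ofReal K.toReal := (ENNReal.ofReal_toReal hKt).symm
        _ ≤ ENNReal.ofReal C0 := ENNReal.ofReal_le_ofReal (by simp only [hC0]; linarith)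
      calc (K * c') ^ (1/(2:ℝ)) ≤ (ENNReal.ofReal C0 * c') ^ (1/(2:ℝ)) :=
            ENNReal.rpow_le_rpow (mul_le_mul_left hKle _) (by norm_num)
      _ = (ENNReal.ofReal (C0 * c)) ^ (1/(2:ℝ)) := by
            rw [hc', ← ENNReal.ofReal_mul (by linarith)]
      _ = ENNReal.ofReal ((C0 * c) ^ (1/(2:ℝ))) := by
            rw [← ENNReal.ofReal_rpow_of_nonneg (by positivity) (by norm_num)]
      _ = ENNReal.ofReal (Real.sqrt (C0 * c)) := by rw [Real.sqrt_eq_rpow]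
      _ = ENNReal.ofReal (Real.sqrt C0 * Real.sqrt c) := by
            rw [Real.sqrt_mul (by linarith) c]
      _ ≤ ENNReal.ofReal (C0 * Real.sqrt c) := by
            have hsqrt : Real.sqrt C0 ≤ C0 := by
              have h1 : Real.sqrt C0 ≤ Real.sqrt (C0 ^ 2) := Real.sqrt_le_sqrt (by nlinarith)
              rwa [Real.sqrt_sq (by linarith)] at h1
            exact
            ENNReal.ofReal_le_ofReal
              (mul_le_mul_of_nonneg_right hsqrt (Real.sqrt_nonneg c))
    calc (∫⁻ x, (∫⁻ y,
          ENNReal.ofReal (((x.1 - y.1) ^ 2 + (x.2 - y.2) ^ 2) ^ ((s - 2) / 2)) *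
            G y ∂volume) ∂μ)
        ≤ ∫⁻ x, (∫⁻ y, edist x y ^ (s - 2) * G y ∂volume) ∂μ := step1
    _ = ∫⁻ y, F y * G y ∂volume := step2
    _ ≤ (∫⁻ y, F y ^ (2:ℝ) ∂volume) ^ (1/(2:ℝ)) *
          (∫⁻ y, G y ^ (2:ℝ) ∂volume) ^ (1/(2:ℝ)) := by
        refine le_trans (le_of_eq (lintegral_congr fun y => ?_)) step3
        simp [Pi.mul_apply]
    _ = (∫⁻ y, F y ^ (2:ℝ) ∂volume) ^ (1/(2:ℝ)) * eLpNorm g 2 volume := by rw [hGnorm]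
    _ ≤ (K * c') ^ (1/(2:ℝ)) * eLpNorm g 2 volume := mul_le_mul_left hFbound _
    _ ≤ ENNReal.ofReal ((K.toReal + 1) * Real.sqrt c) * eLpNorm g 2 volume :=
        mul_le_mul_left hfinal _

end
end

section
/- Let 0 < s < 1 and 2 − s < α ≤ 2, and let Ω ⊂ ℝ² be a bounded set. There is a constant C, depending only on s, α and Ω, such that every Borel probability measure μ supported in Ω which is α-dimensional with constant c satisfies ∫∫ |x₁−y₁|^{s−1} |x₂−y₂|^{s−1} dμ(x) dμ(y) ≤ C c. -/
open MeasureTheory Real Filter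
open scoped ENNReal

noncomputable section

namespace Stmt11Aux

/-- `pw t = 2 ^ t` (real power). -/
def pw (t : ℝ) : ℝ := (2 : ℝ) ^ t

lemma pw_pos (t : ℝ) : 0 < pw t := Real.rpow_pos_of_pos two_pos t

lemma pw_add (a b : ℝ) : pw (a + b) = pw a * pw b := Real.rpow_add two_pos a b

lemma pw_sub (a b : ℝ) : pw (a - b) = pw a / pw b := Real.rpow_sub two_pos a b

lemma pw_zero : pw 0 = 1 := Real.rpow_zero 2

lemma pw_one : pw 1 = 2 := Real.rpow_one 2

lemma pw_mono {a b : ℝ} (h : a ≤ b) : pw a ≤ pw b :=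
  Real.rpow_le_rpow_of_exponent_le one_le_two h

lemma pw_lt {a b : ℝ} (h : a < b) : pw a < pw b :=
  Real.rpow_lt_rpow_of_exponent_lt one_lt_two h

lemma one_le_pw {a : ℝ} (h : 0 ≤ a) : 1 ≤ pw a := by
  rw [← pw_zero]; exact pw_mono h

lemma pw_natCast (k : ℕ) : pw k = 2 ^ k := Real.rpow_natCast 2 k

lemma pw_rpow (a b : ℝ) : (pw a) ^ b = pw (a * b) :=
  (Real.rpow_mul (by norm_num) a b).symm

lemma pw_inv (a : ℝ) : (pw a)⁻¹ = pw (-a) := (Real.rpow_neg (by norm_num) a).symm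

lemma pw_pow (a : ℝ) (k : ℕ) : (pw a) ^ k = pw (a * k) := by
  rw [← Real.rpow_natCast (pw a) k, pw_rpow]

/-- Dyadic decomposition: every `t ∈ (0, 2^J]` lies in some `(2^{J-m-1}, 2^{J-m}]`. -/
lemma dyadic_mem (J : ℕ) {t : ℝ} (ht : 0 < t) (htJ : t ≤ pw J) :
    ∃ m : ℕ, pw ((J : ℝ) - ((m : ℝ) + 1)) < t ∧ t ≤ pw ((J : ℝ) - (m : ℝ)) := by
  classical
  have hex : ∃ k : ℕ, pw ((J : ℝ) - (k : ℝ)) < t := by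
    obtain ⟨k, hk⟩ := pow_unbounded_of_one_lt (pw (J : ℝ) / t) (one_lt_two (α := ℝ))
    refine ⟨k, ?_⟩
    have hk' : pw (J : ℝ) < 2 ^ k * t := (div_lt_iff₀ ht).mp hk
    rw [pw_sub, div_lt_iff₀ (pw_pos _), pw_natCast k]
    linarith [hk']
  have hspec : pw ((J : ℝ) - (Nat.find hex : ℝ)) < t := Nat.find_spec hex
  have hk₀pos : 0 < Nat.find hex := by
    rcases Nat.eq_zero_or_pos (Nat.find hex) with h | h
    · exfalso
      rw [h] at hspec
      simp only [Nat.cast_zero, sub_zero] at hspec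
      linarith
    · exact h
  refine ⟨Nat.find hex - 1, ?_, ?_⟩
  · have hcast : ((Nat.find hex - 1 : ℕ) : ℝ) + 1 = (Nat.find hex : ℝ) := by
      rw [Nat.cast_sub hk₀pos]; push_cast; ring
    rw [hcast]; exact hspec
  · have hmin := Nat.find_min hex (show Nat.find hex - 1 < Nat.find hex from
      Nat.sub_lt hk₀pos one_pos)
    exact not_lt.mp hmin

/-- Covering a thin horizontal-width rectangle by balls: rectangle bound, version with
the first coordinate thin. -/
lemma rect_bound_fst (μ : MeasureTheory.Measure (ℝ × ℝ)) (c α : ℝ) (hc : 0 ≤ c)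
    (hdim : ∀ (x : ℝ × ℝ) (r : ℝ), 0 < r → μ (EBall x r) ≤ ENNReal.ofReal (c * r ^ α))
    (a b r ρ : ℝ) (hr : 0 < r) (hrρ : r ≤ ρ) :
    μ {y : ℝ × ℝ | |y.1 - a| ≤ r ∧ |y.2 - b| ≤ ρ} ≤
      ENNReal.ofReal ((2 * (ρ / r) + 4) * (c * (2 * r) ^ α)) := by
  classical
  set K := ⌈ρ / r⌉₊ with hKdef
  have hρr : 0 ≤ ρ / r := div_nonneg (by linarith) hr.le
  have hKle : (K : ℝ) ≤ ρ / r + 1 := (Nat.ceil_lt_add_one hρr).le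
  have hrK : ρ / r ≤ (K : ℝ) := Nat.le_ceil _
  have hcover : {y : ℝ × ℝ | |y.1 - a| ≤ r ∧ |y.2 - b| ≤ ρ} ⊆
      ⋃ k ∈ Finset.Icc (-(K : ℤ) - 1) (K : ℤ), EBall (a, b + (k : ℝ) * r) (2 * r) := by
    rintro y ⟨h1, h2⟩
    obtain ⟨h2l, h2r⟩ := abs_le.mp h2
    set k : ℤ := ⌊(y.2 - b) / r⌋ with hkdef
    have hfl : (k : ℝ) ≤ (y.2 - b) / r := Int.floor_le _
    have hfl2 : (y.2 - b) / r < (k : ℝ) + 1 := Int.lt_floor_add_one _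
    have hk1 : (k : ℝ) * r ≤ y.2 - b := by rw [← le_div_iff₀ hr]; exact hfl
    have hk2 : y.2 - b < ((k : ℝ) + 1) * r := by rw [← div_lt_iff₀ hr]; exact hfl2
    have hq1 : (y.2 - b) / r ≤ ρ / r := (div_le_div_iff_of_pos_right hr).mpr h2r
    have hq2 : -(ρ / r) ≤ (y.2 - b) / r := by
      rw [← neg_div]; exact (div_le_div_iff_of_pos_right hr).mpr h2l
    have hub : (k : ℝ) ≤ (K : ℝ) := by linarith
    have hlb : -(K : ℝ) - 1 ≤ (k : ℝ) := by linarith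
    have hkI : k ∈ Finset.Icc (-(K : ℤ) - 1) (K : ℤ) :=
      Finset.mem_Icc.mpr ⟨by exact_mod_cast hlb, by exact_mod_cast hub⟩
    have hball : y ∈ EBall (a, b + (k : ℝ) * r) (2 * r) := by
      show (y.1 - a) ^ 2 + (y.2 - (b + (k : ℝ) * r)) ^ 2 < (2 * r) ^ 2
      have e1 : (y.1 - a) ^ 2 ≤ r ^ 2 := by
        obtain ⟨h1l, h1r⟩ := abs_le.mp h1
        nlinarith
      have e2 : (y.2 - (b + (k : ℝ) * r)) ^ 2 < r ^ 2 := by nlinarith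
      nlinarith
    exact Set.mem_biUnion hkI hball
  have hcard : (Finset.Icc (-(K : ℤ) - 1) (K : ℤ)).card = 2 * K + 2 := by
    rw [Int.card_Icc]; omega
  calc μ {y : ℝ × ℝ | |y.1 - a| ≤ r ∧ |y.2 - b| ≤ ρ}
      ≤ μ (⋃ k ∈ Finset.Icc (-(K : ℤ) - 1) (K : ℤ), EBall (a, b + (k : ℝ) * r) (2 * r)) :=
        MeasureTheory.measure_mono hcover
    _ ≤ ∑ k ∈ Finset.Icc (-(K : ℤ) - 1) (K : ℤ), μ (EBall (a, b + (k : ℝ) * r) (2 * r)) :=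
        MeasureTheory.measure_biUnion_finset_le _ _
    _ ≤ ∑ _k ∈ Finset.Icc (-(K : ℤ) - 1) (K : ℤ), ENNReal.ofReal (c * (2 * r) ^ α) :=
        Finset.sum_le_sum fun k _ => hdim _ _ (by linarith)
    _ = ((2 * K + 2 : ℕ) : ℝ≥0∞) * ENNReal.ofReal (c * (2 * r) ^ α) := by
        rw [Finset.sum_const, hcard, nsmul_eq_mul]
    _ ≤ ENNReal.ofReal ((2 * (ρ / r) + 4) * (c * (2 * r) ^ α)) := by
        rw [← ENNReal.ofReal_natCast, ← ENNReal.ofReal_mul (by positivity)]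
        apply ENNReal.ofReal_le_ofReal
        have hcc : 0 ≤ c * (2 * r) ^ α :=
          mul_nonneg hc (Real.rpow_nonneg (by linarith) α)
        have hnum : ((2 * K + 2 : ℕ) : ℝ) ≤ 2 * (ρ / r) + 4 := by push_cast; linarith
        exact mul_le_mul_of_nonneg_right hnum hcc

/-- Rectangle bound, version with the second coordinate thin. -/
lemma rect_bound_snd (μ : MeasureTheory.Measure (ℝ × ℝ)) (c α : ℝ) (hc : 0 ≤ c)
    (hdim : ∀ (x : ℝ × ℝ) (r : ℝ), 0 < r → μ (EBall x r) ≤ ENNReal.ofReal (c * r ^ α))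
    (a b r ρ : ℝ) (hr : 0 < r) (hrρ : r ≤ ρ) :
    μ {y : ℝ × ℝ | |y.1 - a| ≤ ρ ∧ |y.2 - b| ≤ r} ≤
      ENNReal.ofReal ((2 * (ρ / r) + 4) * (c * (2 * r) ^ α)) := by
  classical
  set K := ⌈ρ / r⌉₊ with hKdef
  have hρr : 0 ≤ ρ / r := div_nonneg (by linarith) hr.le
  have hKle : (K : ℝ) ≤ ρ / r + 1 := (Nat.ceil_lt_add_one hρr).le
  have hrK : ρ / r ≤ (K : ℝ) := Nat.le_ceil _
  have hcover : {y : ℝ × ℝ | |y.1 - a| ≤ ρ ∧ |y.2 - b| ≤ r} ⊆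
      ⋃ k ∈ Finset.Icc (-(K : ℤ) - 1) (K : ℤ), EBall (a + (k : ℝ) * r, b) (2 * r) := by
    rintro y ⟨h1, h2⟩
    obtain ⟨h1l, h1r⟩ := abs_le.mp h1
    set k : ℤ := ⌊(y.1 - a) / r⌋ with hkdef
    have hfl : (k : ℝ) ≤ (y.1 - a) / r := Int.floor_le _
    have hfl2 : (y.1 - a) / r < (k : ℝ) + 1 := Int.lt_floor_add_one _
    have hk1 : (k : ℝ) * r ≤ y.1 - a := by rw [← le_div_iff₀ hr]; exact hfl
    have hk2 : y.1 - a < ((k : ℝ) + 1) * r := by rw [← div_lt_iff₀ hr]; exact hfl2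
    have hq1 : (y.1 - a) / r ≤ ρ / r := (div_le_div_iff_of_pos_right hr).mpr h1r
    have hq2 : -(ρ / r) ≤ (y.1 - a) / r := by
      rw [← neg_div]; exact (div_le_div_iff_of_pos_right hr).mpr h1l
    have hub : (k : ℝ) ≤ (K : ℝ) := by linarith
    have hlb : -(K : ℝ) - 1 ≤ (k : ℝ) := by linarith
    have hkI : k ∈ Finset.Icc (-(K : ℤ) - 1) (K : ℤ) :=
      Finset.mem_Icc.mpr ⟨by exact_mod_cast hlb, by exact_mod_cast hub⟩
    have hball : y ∈ EBall (a + (k : ℝ) * r, b) (2 * r) := by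
      show (y.1 - (a + (k : ℝ) * r)) ^ 2 + (y.2 - b) ^ 2 < (2 * r) ^ 2
      have e1 : (y.2 - b) ^ 2 ≤ r ^ 2 := by
        obtain ⟨h2l, h2r⟩ := abs_le.mp h2
        nlinarith
      have e2 : (y.1 - (a + (k : ℝ) * r)) ^ 2 < r ^ 2 := by nlinarith
      nlinarith
    exact Set.mem_biUnion hkI hball
  have hcard : (Finset.Icc (-(K : ℤ) - 1) (K : ℤ)).card = 2 * K + 2 := by
    rw [Int.card_Icc]; omega
  calc μ {y : ℝ × ℝ | |y.1 - a| ≤ ρ ∧ |y.2 - b| ≤ r}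
      ≤ μ (⋃ k ∈ Finset.Icc (-(K : ℤ) - 1) (K : ℤ), EBall (a + (k : ℝ) * r, b) (2 * r)) :=
        MeasureTheory.measure_mono hcover
    _ ≤ ∑ k ∈ Finset.Icc (-(K : ℤ) - 1) (K : ℤ), μ (EBall (a + (k : ℝ) * r, b) (2 * r)) :=
        MeasureTheory.measure_biUnion_finset_le _ _
    _ ≤ ∑ _k ∈ Finset.Icc (-(K : ℤ) - 1) (K : ℤ), ENNReal.ofReal (c * (2 * r) ^ α) :=
        Finset.sum_le_sum fun k _ => hdim _ _ (by linarith)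
    _ = ((2 * K + 2 : ℕ) : ℝ≥0∞) * ENNReal.ofReal (c * (2 * r) ^ α) := by
        rw [Finset.sum_const, hcard, nsmul_eq_mul]
    _ ≤ ENNReal.ofReal ((2 * (ρ / r) + 4) * (c * (2 * r) ^ α)) := by
        rw [← ENNReal.ofReal_natCast, ← ENNReal.ofReal_mul (by positivity)]
        apply ENNReal.ofReal_le_ofReal
        have hcc : 0 ≤ c * (2 * r) ^ α :=
          mul_nonneg hc (Real.rpow_nonneg (by linarith) α)
        have hnum : ((2 * K + 2 : ℕ) : ℝ) ≤ 2 * (ρ / r) + 4 := by push_cast; linarith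
        exact mul_le_mul_of_nonneg_right hnum hcc

/-- The key real-number inequality behind the dyadic summation. -/
lemma key_real (s α β J c : ℝ) (hc : 0 ≤ c)
    (hβ1 : β ≤ s) (hβ2 : β ≤ α + s - 2) (m n M N : ℝ)
    (hsum : M + N = m + n) (hNM : N ≤ M) (hM0 : 0 ≤ M) (hN0 : 0 ≤ N) :
    pw ((m + 1 - J) * (1 - s)) * pw ((n + 1 - J) * (1 - s)) *
        ((2 * pw (M - N) + 4) * (c * (pw (1 + J - M)) ^ α)) ≤
      6 * c * pw ((2 - 2 * J) * (1 - s) + (1 + J) * α) * (pw (-β * m) * pw (-β * n)) := by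
  have h1 : (1 : ℝ) ≤ pw (M - N) := one_le_pw (by linarith)
  have hexp : (m + 1 - J) * (1 - s) + ((n + 1 - J) * (1 - s) + ((M - N) + (1 + J - M) * α)) ≤
      ((2 - 2 * J) * (1 - s) + (1 + J) * α) + (-β * m + -β * n) := by
    have e1 : M * (2 - s - α) ≤ M * (-β) := mul_le_mul_of_nonneg_left (by linarith) hM0
    have e2 : N * (-s) ≤ N * (-β) := mul_le_mul_of_nonneg_left (by linarith) hN0
    have e3 : (M + N) * (1 - s) = (m + n) * (1 - s) := by rw [hsum]
    have e4 : β * (M + N) = β * (m + n) := by rw [hsum]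
    nlinarith [e1, e2, e3, e4]
  calc pw ((m + 1 - J) * (1 - s)) * pw ((n + 1 - J) * (1 - s)) *
        ((2 * pw (M - N) + 4) * (c * (pw (1 + J - M)) ^ α))
      = c * (2 * pw (M - N) + 4) *
          (pw ((m + 1 - J) * (1 - s)) * (pw ((n + 1 - J) * (1 - s)) * pw ((1 + J - M) * α))) := by
        rw [pw_rpow]; ring
    _ ≤ c * (6 * pw (M - N)) *
          (pw ((m + 1 - J) * (1 - s)) * (pw ((n + 1 - J) * (1 - s)) * pw ((1 + J - M) * α))) := by
        refine mul_le_mul_of_nonneg_right ?_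
          (mul_nonneg (pw_pos _).le (mul_nonneg (pw_pos _).le (pw_pos _).le))
        exact mul_le_mul_of_nonneg_left (by linarith) hc
    _ = 6 * c * pw ((m + 1 - J) * (1 - s) +
          ((n + 1 - J) * (1 - s) + ((M - N) + (1 + J - M) * α))) := by
        rw [pw_add, pw_add, pw_add]; ring
    _ ≤ 6 * c * pw (((2 - 2 * J) * (1 - s) + (1 + J) * α) + (-β * m + -β * n)) := by
        exact mul_le_mul_of_nonneg_left (pw_mono hexp) (by positivity)
    _ = 6 * c * pw ((2 - 2 * J) * (1 - s) + (1 + J) * α) * (pw (-β * m) * pw (-β * n)) := by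
        rw [pw_add, pw_add, pw_add]; ring

end Stmt11Aux
namespace Stmt11Aux

/-- Vertical lines are null for an `α`-dimensional measure with `α > 1` supported in a ball. -/
lemma line_null_fst (μ : MeasureTheory.Measure (ℝ × ℝ)) (c α R : ℝ) (hc : 0 ≤ c)
    (hα1 : 1 < α) (hR : 1 ≤ R)
    (hdim : ∀ (x : ℝ × ℝ) (r : ℝ), 0 < r → μ (EBall x r) ≤ ENNReal.ofReal (c * r ^ α))
    (hB : μ (Metric.closedBall (0 : ℝ × ℝ) R)ᶜ = 0) (t : ℝ) :
    μ {y : ℝ × ℝ | y.1 = t} = 0 := by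
  have key : ∀ n : ℕ, μ {y : ℝ × ℝ | y.1 = t} ≤
      ENNReal.ofReal (6 * (c * (2 * R) ^ α) * (pw (1 - α)) ^ n) := by
    intro n
    set r : ℝ := R * pw (-(n : ℝ)) with hrdef
    have hr0 : 0 < r := mul_pos (by linarith) (pw_pos _)
    have hpw1 : pw (-(n : ℝ)) ≤ 1 := by
      rw [← pw_zero]
      exact pw_mono (by simp)
    have hrR : r ≤ R := by nlinarith [pw_pos (-(n : ℝ))]
    have hsub : {y : ℝ × ℝ | y.1 = t} ⊆
        {y : ℝ × ℝ | |y.1 - t| ≤ r ∧ |y.2 - 0| ≤ R} ∪ (Metric.closedBall (0 : ℝ × ℝ) R)ᶜ := by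
      intro y hy
      by_cases hyB : y ∈ Metric.closedBall (0 : ℝ × ℝ) R
      · left
        have hy2 : |y.2| ≤ R := by
          have h := Metric.mem_closedBall.mp hyB
          rw [Prod.dist_eq] at h
          have h2 := le_trans (le_max_right _ _) h
          rw [Real.dist_eq] at h2
          simpa using h2
        refine ⟨?_, by simpa using hy2⟩
        have hyt : y.1 = t := hy
        rw [hyt]
        simp [hr0.le]
      · right; exact hyB
    have hstep : μ {y : ℝ × ℝ | y.1 = t} ≤
        ENNReal.ofReal ((2 * (R / r) + 4) * (c * (2 * r) ^ α)) := by
      calc μ {y : ℝ × ℝ | y.1 = t}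
          ≤ μ ({y : ℝ × ℝ | |y.1 - t| ≤ r ∧ |y.2 - 0| ≤ R}) +
              μ (Metric.closedBall (0 : ℝ × ℝ) R)ᶜ :=
            (MeasureTheory.measure_mono hsub).trans (MeasureTheory.measure_union_le _ _)
        _ = μ {y : ℝ × ℝ | |y.1 - t| ≤ r ∧ |y.2 - 0| ≤ R} := by rw [hB, add_zero]
        _ ≤ ENNReal.ofReal ((2 * (R / r) + 4) * (c * (2 * r) ^ α)) :=
            rect_bound_fst μ c α hc hdim t 0 r R hr0 hrR
    refine hstep.trans (ENNReal.ofReal_le_ofReal ?_)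
    have hRne : (R : ℝ) ≠ 0 := by linarith
    have hRr : R / r = pw (n : ℝ) := by
      rw [hrdef, div_mul_eq_div_div, div_self hRne, one_div, pw_inv, neg_neg]
    have h2r : (2 * r) ^ α = (2 * R) ^ α * pw (-(n : ℝ) * α) := by
      rw [hrdef, show 2 * (R * pw (-(n : ℝ))) = (2 * R) * pw (-(n : ℝ)) by ring,
        Real.mul_rpow (by linarith) (pw_pos _).le, pw_rpow]
    rw [hRr, h2r]
    have hge1 : (1 : ℝ) ≤ pw (n : ℝ) := one_le_pw (Nat.cast_nonneg n)
    have hid : pw (n : ℝ) * pw (-(n : ℝ) * α) = (pw (1 - α)) ^ n := by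
      rw [pw_pow, ← pw_add]
      congr 1
      ring
    calc (2 * pw (n : ℝ) + 4) * (c * ((2 * R) ^ α * pw (-(n : ℝ) * α)))
        ≤ 6 * pw (n : ℝ) * (c * ((2 * R) ^ α * pw (-(n : ℝ) * α))) := by
          refine mul_le_mul_of_nonneg_right (by linarith) ?_
          exact mul_nonneg hc (mul_nonneg (Real.rpow_nonneg (by linarith) _) (pw_pos _).le)
      _ = 6 * (c * (2 * R) ^ α) * (pw (n : ℝ) * pw (-(n : ℝ) * α)) := by ring
      _ = 6 * (c * (2 * R) ^ α) * (pw (1 - α)) ^ n := by rw [hid]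
  have hlt : pw (1 - α) < 1 := by
    have h := pw_lt (show (1 : ℝ) - α < 0 by linarith)
    rwa [pw_zero] at h
  have hlim : Filter.Tendsto
      (fun n : ℕ => ENNReal.ofReal (6 * (c * (2 * R) ^ α) * (pw (1 - α)) ^ n))
      Filter.atTop (nhds 0) := by
    have h1 : Filter.Tendsto (fun n : ℕ => (pw (1 - α)) ^ n) Filter.atTop (nhds 0) :=
      tendsto_pow_atTop_nhds_zero_of_lt_one (pw_pos _).le hlt
    have h2 : Filter.Tendsto (fun n : ℕ => 6 * (c * (2 * R) ^ α) * (pw (1 - α)) ^ n)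
        Filter.atTop (nhds 0) := by
      simpa using h1.const_mul (6 * (c * (2 * R) ^ α))
    simpa using ENNReal.tendsto_ofReal h2
  exact le_antisymm (ge_of_tendsto' hlim key) (by simp)

/-- Horizontal lines are null for an `α`-dimensional measure with `α > 1` supported in a ball. -/
lemma line_null_snd (μ : MeasureTheory.Measure (ℝ × ℝ)) (c α R : ℝ) (hc : 0 ≤ c)
    (hα1 : 1 < α) (hR : 1 ≤ R)
    (hdim : ∀ (x : ℝ × ℝ) (r : ℝ), 0 < r → μ (EBall x r) ≤ ENNReal.ofReal (c * r ^ α))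
    (hB : μ (Metric.closedBall (0 : ℝ × ℝ) R)ᶜ = 0) (t : ℝ) :
    μ {y : ℝ × ℝ | y.2 = t} = 0 := by
  have key : ∀ n : ℕ, μ {y : ℝ × ℝ | y.2 = t} ≤
      ENNReal.ofReal (6 * (c * (2 * R) ^ α) * (pw (1 - α)) ^ n) := by
    intro n
    set r : ℝ := R * pw (-(n : ℝ)) with hrdef
    have hr0 : 0 < r := mul_pos (by linarith) (pw_pos _)
    have hpw1 : pw (-(n : ℝ)) ≤ 1 := by
      rw [← pw_zero]
      exact pw_mono (by simp)
    have hrR : r ≤ R := by nlinarith [pw_pos (-(n : ℝ))]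
    have hsub : {y : ℝ × ℝ | y.2 = t} ⊆
        {y : ℝ × ℝ | |y.1 - 0| ≤ R ∧ |y.2 - t| ≤ r} ∪ (Metric.closedBall (0 : ℝ × ℝ) R)ᶜ := by
      intro y hy
      by_cases hyB : y ∈ Metric.closedBall (0 : ℝ × ℝ) R
      · left
        have hy1 : |y.1| ≤ R := by
          have h := Metric.mem_closedBall.mp hyB
          rw [Prod.dist_eq] at h
          have h2 := le_trans (le_max_left _ _) h
          rw [Real.dist_eq] at h2
          simpa using h2
        refine ⟨by simpa using hy1, ?_⟩
        have hyt : y.2 = t := hy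
        rw [hyt]
        simp [hr0.le]
      · right; exact hyB
    have hstep : μ {y : ℝ × ℝ | y.2 = t} ≤
        ENNReal.ofReal ((2 * (R / r) + 4) * (c * (2 * r) ^ α)) := by
      calc μ {y : ℝ × ℝ | y.2 = t}
          ≤ μ ({y : ℝ × ℝ | |y.1 - 0| ≤ R ∧ |y.2 - t| ≤ r}) +
              μ (Metric.closedBall (0 : ℝ × ℝ) R)ᶜ :=
            (MeasureTheory.measure_mono hsub).trans (MeasureTheory.measure_union_le _ _)
        _ = μ {y : ℝ × ℝ | |y.1 - 0| ≤ R ∧ |y.2 - t| ≤ r} := by rw [hB, add_zero]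
        _ ≤ ENNReal.ofReal ((2 * (R / r) + 4) * (c * (2 * r) ^ α)) :=
            rect_bound_snd μ c α hc hdim 0 t r R hr0 hrR
    refine hstep.trans (ENNReal.ofReal_le_ofReal ?_)
    have hRne : (R : ℝ) ≠ 0 := by linarith
    have hRr : R / r = pw (n : ℝ) := by
      rw [hrdef, div_mul_eq_div_div, div_self hRne, one_div, pw_inv, neg_neg]
    have h2r : (2 * r) ^ α = (2 * R) ^ α * pw (-(n : ℝ) * α) := by
      rw [hrdef, show 2 * (R * pw (-(n : ℝ))) = (2 * R) * pw (-(n : ℝ)) by ring,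
        Real.mul_rpow (by linarith) (pw_pos _).le, pw_rpow]
    rw [hRr, h2r]
    have hge1 : (1 : ℝ) ≤ pw (n : ℝ) := one_le_pw (Nat.cast_nonneg n)
    have hid : pw (n : ℝ) * pw (-(n : ℝ) * α) = (pw (1 - α)) ^ n := by
      rw [pw_pow, ← pw_add]
      congr 1
      ring
    calc (2 * pw (n : ℝ) + 4) * (c * ((2 * R) ^ α * pw (-(n : ℝ) * α)))
        ≤ 6 * pw (n : ℝ) * (c * ((2 * R) ^ α * pw (-(n : ℝ) * α))) := by
          refine mul_le_mul_of_nonneg_right (by linarith) ?_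
          exact mul_nonneg hc (mul_nonneg (Real.rpow_nonneg (by linarith) _) (pw_pos _).le)
      _ = 6 * (c * (2 * R) ^ α) * (pw (n : ℝ) * pw (-(n : ℝ) * α)) := by ring
      _ = 6 * (c * (2 * R) ^ α) * (pw (1 - α)) ^ n := by rw [hid]
  have hlt : pw (1 - α) < 1 := by
    have h := pw_lt (show (1 : ℝ) - α < 0 by linarith)
    rwa [pw_zero] at h
  have hlim : Filter.Tendsto
      (fun n : ℕ => ENNReal.ofReal (6 * (c * (2 * R) ^ α) * (pw (1 - α)) ^ n))
      Filter.atTop (nhds 0) := by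
    have h1 : Filter.Tendsto (fun n : ℕ => (pw (1 - α)) ^ n) Filter.atTop (nhds 0) :=
      tendsto_pow_atTop_nhds_zero_of_lt_one (pw_pos _).le hlt
    have h2 : Filter.Tendsto (fun n : ℕ => 6 * (c * (2 * R) ^ α) * (pw (1 - α)) ^ n)
        Filter.atTop (nhds 0) := by
      simpa using h1.const_mul (6 * (c * (2 * R) ^ α))
    simpa using ENNReal.tendsto_ofReal h2
  exact le_antisymm (ge_of_tendsto' hlim key) (by simp)

end Stmt11Aux

open Stmt11Aux

/-- the fractal-measure bound for the product kernel in the proof of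
Theorem 4.4. Let `0 < s < 1`, `2 - s < α ≤ 2` and `Ω ⊆ ℝ²` bounded. There is
`C = C(s, α, Ω)` such that every α-dimensional Borel probability measure `μ` with
constant `c` supported in `Ω` satisfies
`∫∫ |x₁-y₁|^{s-1} |x₂-y₂|^{s-1} dμ(x) dμ(y) ≤ C c`. -/
theorem stmt11 (s α : ℝ) (hs : 0 < s) (hs' : s < 1) (hα : 2 - s < α) (hα' : α ≤ 2)
    (Ω : Set (ℝ × ℝ)) (hΩ : Bornology.IsBounded Ω) :
    ∃ C : ℝ, 0 < C ∧
      ∀ (μ : Measure (ℝ × ℝ)) (_ : IsProbabilityMeasure μ) (c : ℝ), 0 ≤ c →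
        μ Ωᶜ = 0 →
        (∀ (x : ℝ × ℝ) (r : ℝ), 0 < r → μ (EBall x r) ≤ ENNReal.ofReal (c * r ^ α)) →
        (∫⁻ x, ∫⁻ y,
            (ENNReal.ofReal (|x.1 - y.1| ^ (1 - s)))⁻¹ *
              (ENNReal.ofReal (|x.2 - y.2| ^ (1 - s)))⁻¹ ∂μ ∂μ) ≤
          ENNReal.ofReal (C * c) := by
  classical
  obtain ⟨R₀, hR₀⟩ := hΩ.subset_closedBall (0 : ℝ × ℝ)
  set R : ℝ := max R₀ 1 with hRdef
  have hR1 : (1 : ℝ) ≤ R := le_max_right _ _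
  have hΩB : Ω ⊆ Metric.closedBall (0 : ℝ × ℝ) R :=
    hR₀.trans (Metric.closedBall_subset_closedBall (le_max_left _ _))
  obtain ⟨J, hJ⟩ : ∃ J : ℕ, 2 * R ≤ pw (J : ℝ) := by
    obtain ⟨J, h⟩ := pow_unbounded_of_one_lt (2 * R) (one_lt_two (α := ℝ))
    exact ⟨J, by rw [pw_natCast J]; exact h.le⟩
  have hα1 : (1 : ℝ) < α := by linarith
  set β : ℝ := min s (α + s - 2) with hβdef
  have hβ0 : 0 < β := lt_min hs (by linarith)
  have hβ1 : β ≤ s := min_le_left _ _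
  have hβ2 : β ≤ α + s - 2 := min_le_right _ _
  set W : ℝ := pw (-β) with hWdef
  have hW0 : 0 < W := pw_pos _
  have hW1 : W < 1 := by
    have h := pw_lt (show -β < 0 by linarith)
    rwa [pw_zero] at h
  have h1W : 0 < 1 - W := by linarith
  set X₀ : ℝ := (2 - 2 * (J : ℝ)) * (1 - s) + (1 + (J : ℝ)) * α with hX₀def
  set C : ℝ := 6 * pw X₀ * ((1 - W)⁻¹ * (1 - W)⁻¹) with hCdef
  have hCpos : 0 < C := by
    have := pw_pos X₀
    rw [hCdef]
    positivity
  refine ⟨C, hCpos, ?_⟩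
  intro μ hμ c hc hΩc hdim
  have hBc : μ (Metric.closedBall (0 : ℝ × ℝ) R)ᶜ = 0 :=
    measure_mono_null (Set.compl_subset_compl.mpr hΩB) hΩc
  have hline1 := line_null_fst μ c α R hc hα1 hR1 hdim hBc
  have hline2 := line_null_snd μ c α R hc hα1 hR1 hdim hBc
  have h6c : 0 ≤ 6 * c * pw X₀ := mul_nonneg (by linarith) (pw_pos _).le
  -- the inner integral bound, for x in the ball
  have inner : ∀ x ∈ Metric.closedBall (0 : ℝ × ℝ) R,
      (∫⁻ y, (ENNReal.ofReal (|x.1 - y.1| ^ (1 - s)))⁻¹ *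
        (ENNReal.ofReal (|x.2 - y.2| ^ (1 - s)))⁻¹ ∂μ) ≤ ENNReal.ofReal (C * c) := by
    intro x hx
    have hx1 : |x.1| ≤ R := by
      have h := Metric.mem_closedBall.mp hx
      rw [Prod.dist_eq] at h
      have h1 := le_trans (le_max_left _ _) h
      rw [Real.dist_eq] at h1
      simpa using h1
    have hx2 : |x.2| ≤ R := by
      have h := Metric.mem_closedBall.mp hx
      rw [Prod.dist_eq] at h
      have h1 := le_trans (le_max_right _ _) h
      rw [Real.dist_eq] at h1
      simpa using h1
    set S : ℕ × ℕ → Set (ℝ × ℝ) := fun p =>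
      {y : ℝ × ℝ |
        (pw ((J : ℝ) - ((p.1 : ℝ) + 1)) < |y.1 - x.1| ∧ |y.1 - x.1| ≤ pw ((J : ℝ) - (p.1 : ℝ))) ∧
        (pw ((J : ℝ) - ((p.2 : ℝ) + 1)) < |y.2 - x.2| ∧ |y.2 - x.2| ≤ pw ((J : ℝ) - (p.2 : ℝ)))}
      with hSdef
    have hSmeas : ∀ p : ℕ × ℕ, MeasurableSet (S p) := by
      intro p
      have e : S p = ((fun y : ℝ × ℝ => |y.1 - x.1|) ⁻¹'
            (Set.Ioc (pw ((J : ℝ) - ((p.1 : ℝ) + 1))) (pw ((J : ℝ) - (p.1 : ℝ))))) ∩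
          ((fun y : ℝ × ℝ => |y.2 - x.2|) ⁻¹'
            (Set.Ioc (pw ((J : ℝ) - ((p.2 : ℝ) + 1))) (pw ((J : ℝ) - (p.2 : ℝ))))) := rfl
      rw [e]
      exact (((continuous_fst.sub continuous_const).abs.measurable) measurableSet_Ioc).inter
        (((continuous_snd.sub continuous_const).abs.measurable) measurableSet_Ioc)
    set g : ℕ → ℝ≥0∞ := fun m => ENNReal.ofReal (pw (((m : ℝ) + 1 - (J : ℝ)) * (1 - s)))
      with hgdef
    set q : ℝ≥0∞ := ENNReal.ofReal W with hqdef
    set E : Set (ℝ × ℝ) := Metric.closedBall (0 : ℝ × ℝ) R ∩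
        ({y : ℝ × ℝ | y.1 = x.1} ∪ {y : ℝ × ℝ | y.2 = x.2})ᶜ with hEdef
    have hEmeas : MeasurableSet E := by
      refine measurableSet_closedBall.inter (MeasurableSet.compl ?_)
      have e1 : {y : ℝ × ℝ | y.1 = x.1} = Prod.fst ⁻¹' {x.1} := rfl
      have e2 : {y : ℝ × ℝ | y.2 = x.2} = Prod.snd ⁻¹' {x.2} := rfl
      rw [e1, e2]
      exact (measurable_fst (measurableSet_singleton x.1)).union
        (measurable_snd (measurableSet_singleton x.2))
    have hEc : μ Eᶜ = 0 := by
      rw [hEdef, Set.compl_inter, compl_compl]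
      exact measure_union_null hBc (measure_union_null (hline1 x.1) (hline2 x.2))
    have hpoint : ∀ y ∈ E, (ENNReal.ofReal (|x.1 - y.1| ^ (1 - s)))⁻¹ *
        (ENNReal.ofReal (|x.2 - y.2| ^ (1 - s)))⁻¹ ≤
        ∑' p : ℕ × ℕ, (S p).indicator (fun _ => g p.1 * g p.2) y := by
      intro y hy
      obtain ⟨hyB, hyl⟩ := hy
      rw [Set.mem_compl_iff, Set.mem_union] at hyl
      push_neg at hyl
      obtain ⟨hy1, hy2⟩ := hyl
      have hy1' : y.1 ≠ x.1 := hy1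
      have hy2' : y.2 ≠ x.2 := hy2
      have hyB1 : |y.1| ≤ R := by
        have h := Metric.mem_closedBall.mp hyB
        rw [Prod.dist_eq] at h
        have h1 := le_trans (le_max_left _ _) h
        rw [Real.dist_eq] at h1
        simpa using h1
      have hyB2 : |y.2| ≤ R := by
        have h := Metric.mem_closedBall.mp hyB
        rw [Prod.dist_eq] at h
        have h1 := le_trans (le_max_right _ _) h
        rw [Real.dist_eq] at h1
        simpa using h1
      have ht1 : 0 < |y.1 - x.1| := abs_pos.mpr (sub_ne_zero.mpr hy1')
      have ht2 : 0 < |y.2 - x.2| := abs_pos.mpr (sub_ne_zero.mpr hy2')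
      have ht1J : |y.1 - x.1| ≤ pw (J : ℝ) := by
        have h := abs_sub y.1 x.1
        linarith
      have ht2J : |y.2 - x.2| ≤ pw (J : ℝ) := by
        have h := abs_sub y.2 x.2
        linarith
      obtain ⟨m, hm1, hm2⟩ := dyadic_mem J ht1 ht1J
      obtain ⟨n, hn1, hn2⟩ := dyadic_mem J ht2 ht2J
      have hyS : y ∈ S (m, n) := ⟨⟨hm1, hm2⟩, ⟨hn1, hn2⟩⟩
      have b1 : (ENNReal.ofReal (|x.1 - y.1| ^ (1 - s)))⁻¹ ≤ g m := by
        rw [abs_sub_comm x.1 y.1]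
        have h1 : pw ((J : ℝ) - ((m : ℝ) + 1)) ^ (1 - s) ≤ |y.1 - x.1| ^ (1 - s) :=
          Real.rpow_le_rpow (pw_pos _).le hm1.le (by linarith)
        rw [pw_rpow] at h1
        calc (ENNReal.ofReal (|y.1 - x.1| ^ (1 - s)))⁻¹
            ≤ (ENNReal.ofReal (pw (((J : ℝ) - ((m : ℝ) + 1)) * (1 - s))))⁻¹ :=
              ENNReal.inv_le_inv.mpr (ENNReal.ofReal_le_ofReal h1)
          _ = ENNReal.ofReal ((pw (((J : ℝ) - ((m : ℝ) + 1)) * (1 - s)))⁻¹) :=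
              (ENNReal.ofReal_inv_of_pos (pw_pos _)).symm
          _ = g m := by
              rw [pw_inv, show -(((J : ℝ) - ((m : ℝ) + 1)) * (1 - s)) =
                (((m : ℝ) + 1 - (J : ℝ)) * (1 - s)) by ring]
      have b2 : (ENNReal.ofReal (|x.2 - y.2| ^ (1 - s)))⁻¹ ≤ g n := by
        rw [abs_sub_comm x.2 y.2]
        have h1 : pw ((J : ℝ) - ((n : ℝ) + 1)) ^ (1 - s) ≤ |y.2 - x.2| ^ (1 - s) :=
          Real.rpow_le_rpow (pw_pos _).le hn1.le (by linarith)
        rw [pw_rpow] at h1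
        calc (ENNReal.ofReal (|y.2 - x.2| ^ (1 - s)))⁻¹
            ≤ (ENNReal.ofReal (pw (((J : ℝ) - ((n : ℝ) + 1)) * (1 - s))))⁻¹ :=
              ENNReal.inv_le_inv.mpr (ENNReal.ofReal_le_ofReal h1)
          _ = ENNReal.ofReal ((pw (((J : ℝ) - ((n : ℝ) + 1)) * (1 - s)))⁻¹) :=
              (ENNReal.ofReal_inv_of_pos (pw_pos _)).symm
          _ = g n := by
              rw [pw_inv, show -(((J : ℝ) - ((n : ℝ) + 1)) * (1 - s)) =
                (((n : ℝ) + 1 - (J : ℝ)) * (1 - s)) by ring]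
      calc (ENNReal.ofReal (|x.1 - y.1| ^ (1 - s)))⁻¹ *
            (ENNReal.ofReal (|x.2 - y.2| ^ (1 - s)))⁻¹
          ≤ g m * g n := mul_le_mul' b1 b2
        _ = (S (m, n)).indicator (fun _ => g m * g n) y :=
            (Set.indicator_of_mem hyS (fun _ => g m * g n)).symm
        _ ≤ ∑' p : ℕ × ℕ, (S p).indicator (fun _ => g p.1 * g p.2) y := ENNReal.le_tsum (m, n)
    have hterm : ∀ p : ℕ × ℕ, g p.1 * g p.2 * μ (S p) ≤
        ENNReal.ofReal (6 * c * pw X₀) * q ^ p.1 * q ^ p.2 := by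
      rintro ⟨m, n⟩
      have hqm : q ^ m = ENNReal.ofReal (pw (-β * (m : ℝ))) := by
        rw [hqdef, ← ENNReal.ofReal_pow hW0.le, hWdef, pw_pow]
      have hqn : q ^ n = ENNReal.ofReal (pw (-β * (n : ℝ))) := by
        rw [hqdef, ← ENNReal.ofReal_pow hW0.le, hWdef, pw_pow]
      rcases le_total (n : ℝ) (m : ℝ) with hnm | hmn
      · -- n ≤ m : thin in the first coordinate
        have hsub : S (m, n) ⊆ {y : ℝ × ℝ | |y.1 - x.1| ≤ pw ((J : ℝ) - (m : ℝ)) ∧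
            |y.2 - x.2| ≤ pw ((J : ℝ) - (n : ℝ))} := fun y hy => ⟨hy.1.2, hy.2.2⟩
        have hrat : pw ((J : ℝ) - (n : ℝ)) / pw ((J : ℝ) - (m : ℝ)) = pw ((m : ℝ) - (n : ℝ)) := by
          rw [← pw_sub]; congr 1; ring
        have h2r : 2 * pw ((J : ℝ) - (m : ℝ)) = pw (1 + (J : ℝ) - (m : ℝ)) := by
          rw [show (1 + (J : ℝ) - (m : ℝ)) = 1 + ((J : ℝ) - (m : ℝ)) by ring, pw_add, pw_one]
        have hμS : μ (S (m, n)) ≤ ENNReal.ofReal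
            ((2 * pw ((m : ℝ) - (n : ℝ)) + 4) * (c * (pw (1 + (J : ℝ) - (m : ℝ))) ^ α)) := by
          have h := rect_bound_fst μ c α hc hdim x.1 x.2
            (pw ((J : ℝ) - (m : ℝ))) (pw ((J : ℝ) - (n : ℝ)))
            (pw_pos _) (pw_mono (by linarith))
          rw [hrat, h2r] at h
          exact (measure_mono hsub).trans h
        have hkey := key_real s α β (J : ℝ) c hc hβ1 hβ2 (m : ℝ) (n : ℝ) (m : ℝ) (n : ℝ)
          (by ring) hnm (Nat.cast_nonneg m) (Nat.cast_nonneg n)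
        calc g m * g n * μ (S (m, n))
            ≤ ENNReal.ofReal (pw (((m : ℝ) + 1 - (J : ℝ)) * (1 - s))) *
                ENNReal.ofReal (pw (((n : ℝ) + 1 - (J : ℝ)) * (1 - s))) *
                ENNReal.ofReal ((2 * pw ((m : ℝ) - (n : ℝ)) + 4) *
                  (c * (pw (1 + (J : ℝ) - (m : ℝ))) ^ α)) := mul_le_mul' le_rfl hμS
          _ = ENNReal.ofReal (pw (((m : ℝ) + 1 - (J : ℝ)) * (1 - s)) *
                pw (((n : ℝ) + 1 - (J : ℝ)) * (1 - s)) *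
                ((2 * pw ((m : ℝ) - (n : ℝ)) + 4) *
                  (c * (pw (1 + (J : ℝ) - (m : ℝ))) ^ α))) := by
              rw [← ENNReal.ofReal_mul (pw_pos _).le,
                ← ENNReal.ofReal_mul (mul_nonneg (pw_pos _).le (pw_pos _).le)]
          _ ≤ ENNReal.ofReal (6 * c * pw X₀ * (pw (-β * (m : ℝ)) * pw (-β * (n : ℝ)))) := by
              apply ENNReal.ofReal_le_ofReal
              rw [hX₀def]
              exact hkey
          _ = ENNReal.ofReal (6 * c * pw X₀) * q ^ m * q ^ n := by
              rw [hqm, hqn, ← ENNReal.ofReal_mul h6c,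
                ← ENNReal.ofReal_mul (mul_nonneg h6c (pw_pos _).le)]
              congr 1
              ring
      · -- m ≤ n : thin in the second coordinate
        have hsub : S (m, n) ⊆ {y : ℝ × ℝ | |y.1 - x.1| ≤ pw ((J : ℝ) - (m : ℝ)) ∧
            |y.2 - x.2| ≤ pw ((J : ℝ) - (n : ℝ))} := fun y hy => ⟨hy.1.2, hy.2.2⟩
        have hrat : pw ((J : ℝ) - (m : ℝ)) / pw ((J : ℝ) - (n : ℝ)) = pw ((n : ℝ) - (m : ℝ)) := by
          rw [← pw_sub]; congr 1; ring
        have h2r : 2 * pw ((J : ℝ) - (n : ℝ)) = pw (1 + (J : ℝ) - (n : ℝ)) := by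
          rw [show (1 + (J : ℝ) - (n : ℝ)) = 1 + ((J : ℝ) - (n : ℝ)) by ring, pw_add, pw_one]
        have hμS : μ (S (m, n)) ≤ ENNReal.ofReal
            ((2 * pw ((n : ℝ) - (m : ℝ)) + 4) * (c * (pw (1 + (J : ℝ) - (n : ℝ))) ^ α)) := by
          have h := rect_bound_snd μ c α hc hdim x.1 x.2
            (pw ((J : ℝ) - (n : ℝ))) (pw ((J : ℝ) - (m : ℝ)))
            (pw_pos _) (pw_mono (by linarith))
          rw [hrat, h2r] at h
          exact (measure_mono hsub).trans h
        have hkey := key_real s α β (J : ℝ) c hc hβ1 hβ2 (m : ℝ) (n : ℝ) (n : ℝ) (m : ℝ)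
          (by ring) hmn (Nat.cast_nonneg n) (Nat.cast_nonneg m)
        calc g m * g n * μ (S (m, n))
            ≤ ENNReal.ofReal (pw (((m : ℝ) + 1 - (J : ℝ)) * (1 - s))) *
                ENNReal.ofReal (pw (((n : ℝ) + 1 - (J : ℝ)) * (1 - s))) *
                ENNReal.ofReal ((2 * pw ((n : ℝ) - (m : ℝ)) + 4) *
                  (c * (pw (1 + (J : ℝ) - (n : ℝ))) ^ α)) := mul_le_mul' le_rfl hμS
          _ = ENNReal.ofReal (pw (((m : ℝ) + 1 - (J : ℝ)) * (1 - s)) *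
                pw (((n : ℝ) + 1 - (J : ℝ)) * (1 - s)) *
                ((2 * pw ((n : ℝ) - (m : ℝ)) + 4) *
                  (c * (pw (1 + (J : ℝ) - (n : ℝ))) ^ α))) := by
              rw [← ENNReal.ofReal_mul (pw_pos _).le,
                ← ENNReal.ofReal_mul (mul_nonneg (pw_pos _).le (pw_pos _).le)]
          _ ≤ ENNReal.ofReal (6 * c * pw X₀ * (pw (-β * (m : ℝ)) * pw (-β * (n : ℝ)))) := by
              apply ENNReal.ofReal_le_ofReal
              rw [hX₀def]
              exact hkey
          _ = ENNReal.ofReal (6 * c * pw X₀) * q ^ m * q ^ n := by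
              rw [hqm, hqn, ← ENNReal.ofReal_mul h6c,
                ← ENNReal.ofReal_mul (mul_nonneg h6c (pw_pos _).le)]
              congr 1
              ring
    calc (∫⁻ y, (ENNReal.ofReal (|x.1 - y.1| ^ (1 - s)))⁻¹ *
          (ENNReal.ofReal (|x.2 - y.2| ^ (1 - s)))⁻¹ ∂μ)
        = ∫⁻ y, E.indicator (fun y => (ENNReal.ofReal (|x.1 - y.1| ^ (1 - s)))⁻¹ *
            (ENNReal.ofReal (|x.2 - y.2| ^ (1 - s)))⁻¹) y ∂μ := by
          refine lintegral_congr_ae (MeasureTheory.ae_iff.mpr (measure_mono_null ?_ hEc))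
          intro y hy
          rw [Set.mem_setOf_eq] at hy
          rw [Set.mem_compl_iff]
          intro hyE
          exact hy (Set.indicator_of_mem hyE
            (fun y => (ENNReal.ofReal (|x.1 - y.1| ^ (1 - s)))⁻¹ *
              (ENNReal.ofReal (|x.2 - y.2| ^ (1 - s)))⁻¹)).symm
      _ = ∫⁻ y in E, (ENNReal.ofReal (|x.1 - y.1| ^ (1 - s)))⁻¹ *
            (ENNReal.ofReal (|x.2 - y.2| ^ (1 - s)))⁻¹ ∂μ := lintegral_indicator hEmeas _
      _ ≤ ∫⁻ y in E, (∑' p : ℕ × ℕ, (S p).indicator (fun _ => g p.1 * g p.2) y) ∂μ :=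
          setLIntegral_mono' hEmeas hpoint
      _ ≤ ∫⁻ y, (∑' p : ℕ × ℕ, (S p).indicator (fun _ => g p.1 * g p.2) y) ∂μ :=
          setLIntegral_le_lintegral _ _
      _ = ∑' p : ℕ × ℕ, g p.1 * g p.2 * μ (S p) := by
          rw [lintegral_tsum (fun p => (measurable_const.indicator (hSmeas p)).aemeasurable)]
          exact tsum_congr fun p => lintegral_indicator_const (hSmeas p) _
      _ ≤ ∑' p : ℕ × ℕ, ENNReal.ofReal (6 * c * pw X₀) * q ^ p.1 * q ^ p.2 :=
          ENNReal.tsum_le_tsum hterm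
      _ = ENNReal.ofReal (6 * c * pw X₀) * ((1 - q)⁻¹ * (1 - q)⁻¹) := by
          calc ∑' p : ℕ × ℕ, ENNReal.ofReal (6 * c * pw X₀) * q ^ p.1 * q ^ p.2
              = ∑' p : ℕ × ℕ, ENNReal.ofReal (6 * c * pw X₀) * (q ^ p.1 * q ^ p.2) :=
                tsum_congr fun p => by rw [mul_assoc]
            _ = ENNReal.ofReal (6 * c * pw X₀) * ∑' p : ℕ × ℕ, q ^ p.1 * q ^ p.2 :=
                ENNReal.tsum_mul_left
            _ = ENNReal.ofReal (6 * c * pw X₀) * ((1 - q)⁻¹ * (1 - q)⁻¹) := by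
                congr 1
                rw [ENNReal.tsum_prod']
                calc ∑' (a : ℕ) (b : ℕ), q ^ a * q ^ b
                    = ∑' (a : ℕ), q ^ a * ∑' (b : ℕ), q ^ b :=
                      tsum_congr fun a => ENNReal.tsum_mul_left
                  _ = (∑' (a : ℕ), q ^ a) * ∑' (b : ℕ), q ^ b := ENNReal.tsum_mul_right
                  _ = (1 - q)⁻¹ * (1 - q)⁻¹ := by rw [ENNReal.tsum_geometric]
      _ ≤ ENNReal.ofReal (C * c) := by
          have h1q : (1 : ℝ≥0∞) - q = ENNReal.ofReal (1 - W) := by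
            rw [hqdef, ENNReal.ofReal_sub 1 hW0.le, ENNReal.ofReal_one]
          have h2q : ((1 : ℝ≥0∞) - q)⁻¹ = ENNReal.ofReal ((1 - W)⁻¹) := by
            rw [h1q, ← ENNReal.ofReal_inv_of_pos h1W]
          rw [h2q, ← ENNReal.ofReal_mul (inv_nonneg.mpr h1W.le),
            ← ENNReal.ofReal_mul h6c]
          apply ENNReal.ofReal_le_ofReal
          rw [hCdef]
          exact le_of_eq (by ring)
  calc (∫⁻ x, ∫⁻ y,
        (ENNReal.ofReal (|x.1 - y.1| ^ (1 - s)))⁻¹ *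
          (ENNReal.ofReal (|x.2 - y.2| ^ (1 - s)))⁻¹ ∂μ ∂μ)
      = ∫⁻ x, (Metric.closedBall (0 : ℝ × ℝ) R).indicator
          (fun x => ∫⁻ y, (ENNReal.ofReal (|x.1 - y.1| ^ (1 - s)))⁻¹ *
            (ENNReal.ofReal (|x.2 - y.2| ^ (1 - s)))⁻¹ ∂μ) x ∂μ := by
        refine lintegral_congr_ae (MeasureTheory.ae_iff.mpr (measure_mono_null ?_ hBc))
        intro x hx
        rw [Set.mem_setOf_eq] at hx
        rw [Set.mem_compl_iff]
        intro hxB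
        exact hx (Set.indicator_of_mem hxB
          (fun x => ∫⁻ y, (ENNReal.ofReal (|x.1 - y.1| ^ (1 - s)))⁻¹ *
            (ENNReal.ofReal (|x.2 - y.2| ^ (1 - s)))⁻¹ ∂μ)).symm
    _ = ∫⁻ x in Metric.closedBall (0 : ℝ × ℝ) R,
          (∫⁻ y, (ENNReal.ofReal (|x.1 - y.1| ^ (1 - s)))⁻¹ *
            (ENNReal.ofReal (|x.2 - y.2| ^ (1 - s)))⁻¹ ∂μ) ∂μ :=
        lintegral_indicator measurableSet_closedBall _
    _ ≤ ∫⁻ _x in Metric.closedBall (0 : ℝ × ℝ) R, ENNReal.ofReal (C * c) ∂μ :=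
        setLIntegral_mono' measurableSet_closedBall inner
    _ = ENNReal.ofReal (C * c) * μ (Metric.closedBall (0 : ℝ × ℝ) R) :=
        setLIntegral_const _ _
    _ ≤ ENNReal.ofReal (C * c) * 1 := mul_le_mul_right prob_le_one _
    _ = ENNReal.ofReal (C * c) := mul_one _

end
end

section
/- For every Schwartz function φ on ℝ², every k > 0 and every x ∈ ℝ²: (k/(4π)) ∫_{ℝ²} e^{i(k/4)((z₁−x₁)²−(z₂−x₂)²)} φ(z) dz = (2π)^{−2} ∫_{ℝ²} e^{i x·ξ} e^{−i(ξ₁²−ξ₂²)/k} φ̂(ξ) dξ. -/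
open MeasureTheory Real Filter
open scoped ENNReal

noncomputable section

namespace Stmt12Aux

open Complex
open scoped FourierTransform RealInnerProductSpace SchwartzMap

def c1 (k ε : ℝ) : ℂ := (ε : ℂ) - Complex.I * ((k / 4 : ℝ) : ℂ)
def c2 (k ε : ℝ) : ℂ := (ε : ℂ) + Complex.I * ((k / 4 : ℝ) : ℂ)

lemma c1_re (k ε : ℝ) : (c1 k ε).re = ε := by simp [c1]
lemma c1_im (k ε : ℝ) : (c1 k ε).im = -(k / 4) := by simp [c1]
lemma c2_re (k ε : ℝ) : (c2 k ε).re = ε := by simp [c2]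
lemma c2_im (k ε : ℝ) : (c2 k ε).im = k / 4 := by simp [c2]

lemma c1_ne {k : ℝ} (hk : 0 < k) (ε : ℝ) : c1 k ε ≠ 0 := by
  intro h
  have := congrArg Complex.im h
  rw [c1_im] at this
  simp at this
  linarith

lemma c2_ne {k : ℝ} (hk : 0 < k) (ε : ℝ) : c2 k ε ≠ 0 := by
  intro h
  have := congrArg Complex.im h
  rw [c2_im] at this
  simp at this
  linarith

lemma inv_re_pos {c : ℂ} (h : 0 < c.re) : 0 < ((4 * c)⁻¹).re := by
  have hc : c ≠ 0 := fun h0 => by rw [h0] at h; simp at h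
  rw [Complex.inv_re]
  apply div_pos
  · simp [Complex.mul_re]; linarith
  · exact Complex.normSq_pos.2 (mul_ne_zero (by norm_num) hc)

lemma norm_exp_eq (z : ℂ) : ‖Complex.exp z‖ = Real.exp z.re := by
  rw [Complex.norm_exp]

lemma norm_exp_I_mul (r : ℝ) : ‖Complex.exp (Complex.I * (r : ℂ))‖ = 1 := by
  rw [norm_exp_eq]
  simp [Complex.mul_re]

lemma norm_exp_neg_I_mul (r : ℝ) : ‖Complex.exp (-(Complex.I * (r : ℂ)))‖ = 1 := by
  rw [norm_exp_eq]
  simp [Complex.mul_re]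

lemma norm_exp_neg_mul_sq (b : ℂ) (s : ℝ) :
    ‖Complex.exp (-b * (s : ℂ) ^ 2)‖ = Real.exp (-b.re * s ^ 2) := by
  rw [norm_exp_eq]
  congr 1
  have h : -b * (s : ℂ) ^ 2 = ((s ^ 2 : ℝ) : ℂ) * (-b) := by push_cast; ring
  rw [h, Complex.re_ofReal_mul]
  simp; ring

lemma norm_exp_neg_mul_sq_le_one {b : ℂ} (hb : 0 ≤ b.re) (s : ℝ) :
    ‖Complex.exp (-b * (s : ℂ) ^ 2)‖ ≤ 1 := by
  rw [norm_exp_neg_mul_sq, Real.exp_le_one_iff]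
  have : 0 ≤ b.re * s ^ 2 := by positivity
  linarith

/-- 1D Fresnel/Gaussian Fourier integral in the shape we need. -/
lemma oneD {c : ℂ} (hc : 0 < c.re) (t : ℝ) :
    ∫ s : ℝ, Complex.exp (Complex.I * (t : ℂ) * (s : ℂ)) *
        Complex.exp (-(4 * c)⁻¹ * (s : ℂ) ^ 2)
      = (4 * (π : ℂ) * c) ^ (1 / 2 : ℂ) * Complex.exp (-c * (t : ℂ) ^ 2) := by
  have hc0 : c ≠ 0 := fun h0 => by rw [h0] at hc; simp at hc
  have h := fourierIntegral_gaussian (inv_re_pos hc) ((t : ℝ) : ℂ)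
  rw [h]
  congr 1
  · congr 1
    rw [div_inv_eq_mul]
    ring
  · congr 1
    field_simp

/-- `(-(r i))^(1/2) * (r i)^(1/2) = r` for positive real `r`. -/
lemma cpow_half_mul {r : ℝ} (hr : 0 < r) :
    (-((r : ℂ) * Complex.I)) ^ (1 / 2 : ℂ) * ((r : ℂ) * Complex.I) ^ (1 / 2 : ℂ) = (r : ℂ) := by
  have h1 : -((r : ℂ) * Complex.I) ≠ 0 := by
    simp [Complex.ext_iff, hr.ne']
  have h2 : ((r : ℂ) * Complex.I) ≠ 0 := by
    simp [Complex.ext_iff, hr.ne']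
  rw [Complex.cpow_def_of_ne_zero h1, Complex.cpow_def_of_ne_zero h2, ← Complex.exp_add,
    ← add_mul]
  have habs1 : ‖(-((r : ℂ) * Complex.I))‖ = r := by
    simp [abs_of_pos hr]
  have habs2 : ‖((r : ℂ) * Complex.I)‖ = r := by
    simp [abs_of_pos hr]
  have harg1 : Complex.arg (-((r : ℂ) * Complex.I)) = -(π / 2) := by
    rw [show -((r : ℂ) * Complex.I) = (r : ℂ) * (-Complex.I) by ring,
      Complex.arg_real_mul _ hr, Complex.arg_neg_I]
  have harg2 : Complex.arg ((r : ℂ) * Complex.I) = π / 2 := by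
    rw [Complex.arg_real_mul _ hr, Complex.arg_I]
  have hlog : Complex.log (-((r : ℂ) * Complex.I)) + Complex.log ((r : ℂ) * Complex.I)
      = ((2 * Real.log r : ℝ) : ℂ) := by
    apply Complex.ext
    · simp [Complex.log_re, habs1, habs2]
      ring
    · simp [Complex.log_im, harg1, harg2]
  rw [hlog]
  rw [show ((2 * Real.log r : ℝ) : ℂ) * (1 / 2) = ((Real.log r : ℝ) : ℂ) by push_cast; ring]
  rw [← Complex.ofReal_exp, Real.exp_log hr]

def e2 : EuclideanSpace ℝ (Fin 2) ≃L[ℝ] ℝ × ℝ :=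
  (EuclideanSpace.equiv (Fin 2) ℝ).trans
    (ContinuousLinearEquiv.finTwoArrow ℝ ℝ)

lemma e2_coe : ⇑e2 = (fun v : EuclideanSpace ℝ (Fin 2) => (v 0, v 1)) := rfl

lemma e2_symm_apply (ξ : ℝ × ℝ) (i : Fin 2) :
    e2.symm ξ i = if i = 0 then ξ.1 else ξ.2 := by
  fin_cases i <;> rfl

lemma e2_mp : MeasurePreserving (⇑e2) volume volume := by
  have h1 := EuclideanSpace.volume_preserving_symm_measurableEquiv_toLp (Fin 2)
  have h2 := volume_preserving_finTwoArrow ℝ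
  have : ⇑e2 = (⇑(MeasurableEquiv.finTwoArrow : (Fin 2 → ℝ) ≃ᵐ ℝ × ℝ)) ∘
      (⇑(MeasurableEquiv.toLp 2 (Fin 2 → ℝ)).symm) := rfl
  rw [this]
  exact h2.comp h1

lemma e2_emb : MeasurableEmbedding (⇑e2) :=
  e2.toHomeomorph.measurableEmbedding

lemma e2_symm_emb : MeasurableEmbedding (⇑e2.symm) :=
  e2.symm.toHomeomorph.measurableEmbedding

def psi (φ : 𝓢(ℝ × ℝ, ℂ)) : 𝓢(EuclideanSpace ℝ (Fin 2), ℂ) :=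
  SchwartzMap.compCLMOfContinuousLinearEquiv ℝ e2 φ

lemma psi_apply (φ : 𝓢(ℝ × ℝ, ℂ)) (v : EuclideanSpace ℝ (Fin 2)) :
    psi φ v = φ (e2 v) := rfl

lemma FT_eq (φ : 𝓢(ℝ × ℝ, ℂ)) (ξ : ℝ × ℝ) :
    FT (fun w => φ w) ξ = 𝓕 (⇑(psi φ)) (e2.symm ((2 * π)⁻¹ • ξ)) := by
  rw [Real.fourier_eq']
  rw [FT, ← MeasurePreserving.integral_comp e2_mp e2_emb
    (fun z : ℝ × ℝ => Complex.exp (-(Complex.I * ((z.1 * ξ.1 + z.2 * ξ.2 : ℝ) : ℂ))) * φ z)]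
  congr 1
  funext v
  have hinner : (inner ℝ v (e2.symm ((2 * π)⁻¹ • ξ)) : ℝ) = (2 * π)⁻¹ * (v 0 * ξ.1 + v 1 * ξ.2) := by
    simp only [_root_.map_smul, real_inner_smul_right]
    simp [PiLp.inner_apply, RCLike.inner_apply, conj_trivial, Fin.sum_univ_two, e2_symm_apply]
    ring

  rw [hinner]
  have hπ : (2 * π) ≠ 0 := by positivity
  have hre : -2 * π * ((2 * π)⁻¹ * (v 0 * ξ.1 + v 1 * ξ.2)) = -(v 0 * ξ.1 + v 1 * ξ.2) := by
    field_simp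
  rw [hre]
  rw [smul_eq_mul, psi_apply]
  congr 1
  congr 1
  simp only [e2_coe]
  push_cast
  ring

lemma FT_fun_eq (φ : 𝓢(ℝ × ℝ, ℂ)) :
    FT (fun w => φ w) =
      fun ξ : ℝ × ℝ => (SchwartzMap.fourierTransformCLM ℂ (psi φ)) (e2.symm ((2 * π)⁻¹ • ξ)) := by
  funext ξ
  rw [FT_eq, SchwartzMap.fourierTransformCLM_apply, SchwartzMap.fourier_coe]

lemma FT_integrable (φ : 𝓢(ℝ × ℝ, ℂ)) : Integrable (FT (fun w => φ w)) volume := by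
  set h := SchwartzMap.fourierTransformCLM ℂ (psi φ) with hh
  have h1 : Integrable (fun v : EuclideanSpace ℝ (Fin 2) => h ((2 * π)⁻¹ • v)) volume :=
    h.integrable.comp_smul (by positivity)
  have h2 : (FT (fun w => φ w)) ∘ (⇑e2) = fun v => h ((2 * π)⁻¹ • v) := by
    funext v
    rw [Function.comp_apply, FT_fun_eq]
    simp [hh, SchwartzMap.fourierTransformCLM_apply]
  exact (MeasurePreserving.integrable_comp_emb e2_mp e2_emb).1 (h2 ▸ h1)

lemma FT_continuous (φ : 𝓢(ℝ × ℝ, ℂ)) : Continuous (FT (fun w => φ w)) := by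
  rw [FT_fun_eq]
  exact (SchwartzMap.continuous _).comp
    (e2.symm.continuous.comp (continuous_const_smul _))

lemma gauss_re_integ {b : ℂ} (hb : 0 < b.re) :
    Integrable (fun s : ℝ => Real.exp (-b.re * s ^ 2)) volume :=
  integrable_exp_neg_mul_sq hb

/-- The key identity for `ε > 0`. -/
lemma star_eq (φ : 𝓢(ℝ × ℝ, ℂ)) {k ε : ℝ} (hk : 0 < k) (hε : 0 < ε) (x : ℝ × ℝ) :
    ∫ ξ : ℝ × ℝ, Complex.exp (Complex.I * ((x.1 * ξ.1 + x.2 * ξ.2 : ℝ) : ℂ)) *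
        (Complex.exp (-(4 * c1 k ε)⁻¹ * (ξ.1 : ℂ) ^ 2) *
          Complex.exp (-(4 * c2 k ε)⁻¹ * (ξ.2 : ℂ) ^ 2)) *
        FT (fun w => φ w) ξ
      = ((4 * (π : ℂ) * c1 k ε) ^ (1 / 2 : ℂ) * (4 * (π : ℂ) * c2 k ε) ^ (1 / 2 : ℂ)) *
        ∫ z : ℝ × ℝ,
          Complex.exp (-(c1 k ε) * ((z.1 - x.1 : ℝ) : ℂ) ^ 2
            - (c2 k ε) * ((z.2 - x.2 : ℝ) : ℂ) ^ 2) * φ z := by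
  have h1re : 0 < (c1 k ε).re := by rw [c1_re]; exact hε
  have h2re : 0 < (c2 k ε).re := by rw [c2_re]; exact hε
  have hb1 : 0 < ((4 * c1 k ε)⁻¹).re := inv_re_pos h1re
  have hb2 : 0 < ((4 * c2 k ε)⁻¹).re := inv_re_pos h2re
  set b1 := (4 * c1 k ε)⁻¹ with hb1def
  set b2 := (4 * c2 k ε)⁻¹ with hb2def
  -- the function of (ξ, z)
  set F : (ℝ × ℝ) → (ℝ × ℝ) → ℂ := fun ξ z =>
    Complex.exp (Complex.I * ((x.1 * ξ.1 + x.2 * ξ.2 : ℝ) : ℂ)) *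
      (Complex.exp (-b1 * (ξ.1 : ℂ) ^ 2) * Complex.exp (-b2 * (ξ.2 : ℂ) ^ 2)) *
      (Complex.exp (-(Complex.I * ((z.1 * ξ.1 + z.2 * ξ.2 : ℝ) : ℂ))) * φ z) with hF
  have hFint : Integrable (Function.uncurry F) (volume.prod volume) := by
    have hcont : Continuous (Function.uncurry F) := by
      rw [hF]
      fun_prop
    have hg1 : Integrable
        (fun ξ : ℝ × ℝ => Real.exp (-b1.re * ξ.1 ^ 2) * Real.exp (-b2.re * ξ.2 ^ 2)) volume := by
      have := (gauss_re_integ hb1).mul_prod (gauss_re_integ hb2)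
      rwa [← Measure.volume_eq_prod] at this
    have hg2 : Integrable (fun z : ℝ × ℝ => ‖φ z‖) volume := φ.integrable.norm
    have hg : Integrable (fun p : (ℝ × ℝ) × (ℝ × ℝ) =>
        (Real.exp (-b1.re * p.1.1 ^ 2) * Real.exp (-b2.re * p.1.2 ^ 2)) * ‖φ p.2‖)
        (volume.prod volume) := hg1.mul_prod hg2
    refine hg.mono' hcont.aestronglyMeasurable (Filter.Eventually.of_forall fun p => ?_)
    show ‖F p.1 p.2‖ ≤ _
    rw [hF]
    simp only
    rw [norm_mul, norm_mul, norm_mul, norm_mul, norm_exp_I_mul, norm_exp_neg_I_mul,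
      norm_exp_neg_mul_sq, norm_exp_neg_mul_sq]
    exact le_of_eq (by ring)
  calc
    ∫ ξ : ℝ × ℝ, Complex.exp (Complex.I * ((x.1 * ξ.1 + x.2 * ξ.2 : ℝ) : ℂ)) *
        (Complex.exp (-b1 * (ξ.1 : ℂ) ^ 2) * Complex.exp (-b2 * (ξ.2 : ℂ) ^ 2)) *
        FT (fun w => φ w) ξ
        = ∫ ξ : ℝ × ℝ, ∫ z : ℝ × ℝ, F ξ z := by
          congr 1
          funext ξ
          rw [FT, ← integral_const_mul]
    _ = ∫ z : ℝ × ℝ, ∫ ξ : ℝ × ℝ, F ξ z := integral_integral_swap hFint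
    _ = ((4 * (π : ℂ) * c1 k ε) ^ (1 / 2 : ℂ) * (4 * (π : ℂ) * c2 k ε) ^ (1 / 2 : ℂ)) *
        ∫ z : ℝ × ℝ,
          Complex.exp (-(c1 k ε) * ((z.1 - x.1 : ℝ) : ℂ) ^ 2
            - (c2 k ε) * ((z.2 - x.2 : ℝ) : ℂ) ^ 2) * φ z := by
          rw [← integral_const_mul]
          congr 1
          funext z
          have hpt : (fun ξ : ℝ × ℝ => F ξ z) = fun ξ : ℝ × ℝ =>
              ((Complex.exp (Complex.I * ((x.1 - z.1 : ℝ) : ℂ) * (ξ.1 : ℂ)) *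
                 Complex.exp (-b1 * (ξ.1 : ℂ) ^ 2)) *
               (Complex.exp (Complex.I * ((x.2 - z.2 : ℝ) : ℂ) * (ξ.2 : ℂ)) *
                 Complex.exp (-b2 * (ξ.2 : ℂ) ^ 2))) * φ z := by
            funext ξ
            simp only [hF]
            rw [show Complex.exp (Complex.I * ((x.1 * ξ.1 + x.2 * ξ.2 : ℝ) : ℂ)) *
                (Complex.exp (-b1 * (ξ.1 : ℂ) ^ 2) * Complex.exp (-b2 * (ξ.2 : ℂ) ^ 2)) *
                (Complex.exp (-(Complex.I * ((z.1 * ξ.1 + z.2 * ξ.2 : ℝ) : ℂ))) * φ z)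
              = (Complex.exp (Complex.I * ((x.1 * ξ.1 + x.2 * ξ.2 : ℝ) : ℂ)) *
                 Complex.exp (-(Complex.I * ((z.1 * ξ.1 + z.2 * ξ.2 : ℝ) : ℂ))) *
                 (Complex.exp (-b1 * (ξ.1 : ℂ) ^ 2) * Complex.exp (-b2 * (ξ.2 : ℂ) ^ 2))) * φ z
              from by ring]
            congr 1
            simp only [← Complex.exp_add]
            congr 1
            push_cast
            ring
          rw [hpt, integral_mul_const, Measure.volume_eq_prod,
            integral_prod_mul
              (f := fun s : ℝ => Complex.exp (Complex.I * ((x.1 - z.1 : ℝ) : ℂ) * (s : ℂ)) *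
                Complex.exp (-b1 * (s : ℂ) ^ 2))
              (g := fun s : ℝ => Complex.exp (Complex.I * ((x.2 - z.2 : ℝ) : ℂ) * (s : ℂ)) *
                Complex.exp (-b2 * (s : ℂ) ^ 2)),
            hb1def, hb2def, oneD h1re (x.1 - z.1), oneD h2re (x.2 - z.2)]
          have hsq1 : ((x.1 - z.1 : ℝ) : ℂ) ^ 2 = ((z.1 - x.1 : ℝ) : ℂ) ^ 2 := by push_cast; ring
          have hsq2 : ((x.2 - z.2 : ℝ) : ℂ) ^ 2 = ((z.2 - x.2 : ℝ) : ℂ) ^ 2 := by push_cast; ring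
          rw [hsq1, hsq2]
          rw [show -(c1 k ε) * ((z.1 - x.1 : ℝ) : ℂ) ^ 2 - (c2 k ε) * ((z.2 - x.2 : ℝ) : ℂ) ^ 2
            = (-(c1 k ε) * ((z.1 - x.1 : ℝ) : ℂ) ^ 2) + (-(c2 k ε) * ((z.2 - x.2 : ℝ) : ℂ) ^ 2)
            from by ring, Complex.exp_add]
          ring

lemma four_c1_zero (k : ℝ) : (4 : ℂ) * c1 k 0 = -(Complex.I * (k : ℂ)) := by
  simp [c1]; push_cast; ring

lemma four_c2_zero (k : ℝ) : (4 : ℂ) * c2 k 0 = Complex.I * (k : ℂ) := by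
  simp [c2]; push_cast; ring

lemma inv_neg_I_mul {k : ℝ} (hk : k ≠ 0) :
    (-(Complex.I * (k : ℂ)))⁻¹ = Complex.I / (k : ℂ) := by
  have hkc : (k : ℂ) ≠ 0 := Complex.ofReal_ne_zero.2 hk
  rw [eq_div_iff hkc, inv_mul_eq_iff_eq_mul₀ (by simp [hkc])]
  rw [show -(Complex.I * (k : ℂ)) * Complex.I = -(Complex.I * Complex.I) * (k : ℂ) from by ring,
    Complex.I_mul_I]
  ring

/-- Value of the Fresnel multiplier at `ε = 0`. -/
lemma B_zero_eq {k : ℝ} (hk : 0 < k) (ξ : ℝ × ℝ) :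
    Complex.exp (-(4 * c1 k 0)⁻¹ * (ξ.1 : ℂ) ^ 2) *
      Complex.exp (-(4 * c2 k 0)⁻¹ * (ξ.2 : ℂ) ^ 2)
    = Complex.exp (-(Complex.I * (((ξ.1 ^ 2 - ξ.2 ^ 2) / k : ℝ) : ℂ))) := by
  have hkc : (k : ℂ) ≠ 0 := Complex.ofReal_ne_zero.2 hk.ne'
  rw [← Complex.exp_add]
  congr 1
  rw [four_c1_zero, four_c2_zero, inv_neg_I_mul hk.ne']
  have h2 : ((Complex.I * (k : ℂ)))⁻¹ = -(Complex.I / (k : ℂ)) := by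
    rw [show Complex.I * (k : ℂ) = -(-(Complex.I * (k : ℂ))) from by ring, inv_neg,
      inv_neg_I_mul hk.ne']
  rw [h2]
  push_cast
  field_simp
  ring

lemma tendsto_c1 (k : ℝ) : Tendsto (fun ε : ℝ => c1 k ε) (nhdsWithin 0 (Set.Ioi 0)) (nhds (c1 k 0)) := by
  apply Tendsto.mono_left _ nhdsWithin_le_nhds
  have hcont : Continuous (fun ε : ℝ => c1 k ε) := by
    unfold c1; fun_prop
  exact hcont.tendsto 0

lemma tendsto_c2 (k : ℝ) : Tendsto (fun ε : ℝ => c2 k ε) (nhdsWithin 0 (Set.Ioi 0)) (nhds (c2 k 0)) := by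
  apply Tendsto.mono_left _ nhdsWithin_le_nhds
  have hcont : Continuous (fun ε : ℝ => c2 k ε) := by
    unfold c2; fun_prop
  exact hcont.tendsto 0

lemma four_pi_c1_zero (k : ℝ) : 4 * (π : ℂ) * c1 k 0 = -(((π * k : ℝ) : ℂ) * Complex.I) := by
  simp [c1]; push_cast; ring

lemma four_pi_c2_zero (k : ℝ) : 4 * (π : ℂ) * c2 k 0 = ((π * k : ℝ) : ℂ) * Complex.I := by
  simp [c2]; push_cast; ring

lemma four_c1_ne {k : ℝ} (hk : 0 < k) : (4 : ℂ) * c1 k 0 ≠ 0 :=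
  mul_ne_zero (by norm_num) (c1_ne hk 0)

lemma four_c2_ne {k : ℝ} (hk : 0 < k) : (4 : ℂ) * c2 k 0 ≠ 0 :=
  mul_ne_zero (by norm_num) (c2_ne hk 0)

lemma tendsto_D {k : ℝ} (hk : 0 < k) :
    Tendsto (fun ε : ℝ =>
        (4 * (π : ℂ) * c1 k ε) ^ (1 / 2 : ℂ) * (4 * (π : ℂ) * c2 k ε) ^ (1 / 2 : ℂ))
      (nhdsWithin 0 (Set.Ioi 0)) (nhds (((π * k : ℝ) : ℂ))) := by
  have hπk : 0 < π * k := by positivity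
  have h1 : Tendsto (fun ε : ℝ => 4 * (π : ℂ) * c1 k ε) (nhdsWithin 0 (Set.Ioi 0))
      (nhds (4 * (π : ℂ) * c1 k 0)) := (tendsto_c1 k).const_mul _
  have h2 : Tendsto (fun ε : ℝ => 4 * (π : ℂ) * c2 k ε) (nhdsWithin 0 (Set.Ioi 0))
      (nhds (4 * (π : ℂ) * c2 k 0)) := (tendsto_c2 k).const_mul _
  have hm1 : (4 * (π : ℂ) * c1 k 0) ∈ Complex.slitPlane := by
    rw [Complex.mem_slitPlane_iff, four_pi_c1_zero]
    right
    simp [Real.pi_ne_zero, hk.ne']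
  have hm2 : (4 * (π : ℂ) * c2 k 0) ∈ Complex.slitPlane := by
    rw [Complex.mem_slitPlane_iff, four_pi_c2_zero]
    right
    simp [Real.pi_ne_zero, hk.ne']
  have t1 : Tendsto (fun ε : ℝ => (4 * (π : ℂ) * c1 k ε) ^ (1 / 2 : ℂ))
      (nhdsWithin 0 (Set.Ioi 0)) (nhds ((4 * (π : ℂ) * c1 k 0) ^ (1 / 2 : ℂ))) :=
    (continuousAt_cpow_const hm1).tendsto.comp h1
  have t2 : Tendsto (fun ε : ℝ => (4 * (π : ℂ) * c2 k ε) ^ (1 / 2 : ℂ))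
      (nhdsWithin 0 (Set.Ioi 0)) (nhds ((4 * (π : ℂ) * c2 k 0) ^ (1 / 2 : ℂ))) :=
    (continuousAt_cpow_const hm2).tendsto.comp h2
  have := t1.mul t2
  rwa [four_pi_c1_zero, four_pi_c2_zero, cpow_half_mul hπk] at this

lemma G_zero (k : ℝ) (x z : ℝ × ℝ) :
    -(c1 k 0) * ((z.1 - x.1 : ℝ) : ℂ) ^ 2 - (c2 k 0) * ((z.2 - x.2 : ℝ) : ℂ) ^ 2
      = Complex.I * ((phase k x z : ℝ) : ℂ) := by
  simp only [c1, c2, phase]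
  push_cast
  ring

lemma norm_G_le {k ε : ℝ} (hε : 0 ≤ ε) (x z : ℝ × ℝ) :
    ‖Complex.exp (-(c1 k ε) * ((z.1 - x.1 : ℝ) : ℂ) ^ 2
      - (c2 k ε) * ((z.2 - x.2 : ℝ) : ℂ) ^ 2)‖ ≤ 1 := by
  rw [norm_exp_eq, Real.exp_le_one_iff]
  have h : -(c1 k ε) * ((z.1 - x.1 : ℝ) : ℂ) ^ 2 - (c2 k ε) * ((z.2 - x.2 : ℝ) : ℂ) ^ 2
      = ((-((z.1 - x.1) ^ 2) : ℝ) : ℂ) * c1 k ε + ((-((z.2 - x.2) ^ 2) : ℝ) : ℂ) * c2 k ε := by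
    push_cast; ring
  rw [h, Complex.add_re, Complex.re_ofReal_mul, Complex.re_ofReal_mul, c1_re, c2_re]
  nlinarith [sq_nonneg (z.1 - x.1), sq_nonneg (z.2 - x.2)]

lemma tendsto_G (φ : 𝓢(ℝ × ℝ, ℂ)) (k : ℝ) (x : ℝ × ℝ) :
    Tendsto (fun ε : ℝ => ∫ z : ℝ × ℝ,
        Complex.exp (-(c1 k ε) * ((z.1 - x.1 : ℝ) : ℂ) ^ 2
          - (c2 k ε) * ((z.2 - x.2 : ℝ) : ℂ) ^ 2) * φ z)
      (nhdsWithin 0 (Set.Ioi 0))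
      (nhds (∫ z : ℝ × ℝ, Complex.exp (Complex.I * ((phase k x z : ℝ) : ℂ)) * φ z)) := by
  refine tendsto_integral_filter_of_dominated_convergence (fun z => ‖φ z‖) ?_ ?_
    φ.integrable.norm ?_
  · refine Filter.Eventually.of_forall fun ε => Continuous.aestronglyMeasurable ?_
    fun_prop
  · refine eventually_mem_nhdsWithin.mono fun ε hε => ?_
    refine Filter.Eventually.of_forall fun z => ?_
    rw [norm_mul]
    exact mul_le_of_le_one_left (norm_nonneg _) (norm_G_le (le_of_lt hε) x z)
  · refine Filter.Eventually.of_forall fun z => ?_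
    have hexp : Tendsto (fun ε : ℝ =>
        -(c1 k ε) * ((z.1 - x.1 : ℝ) : ℂ) ^ 2 - (c2 k ε) * ((z.2 - x.2 : ℝ) : ℂ) ^ 2)
        (nhdsWithin 0 (Set.Ioi 0))
        (nhds (-(c1 k 0) * ((z.1 - x.1 : ℝ) : ℂ) ^ 2
          - (c2 k 0) * ((z.2 - x.2 : ℝ) : ℂ) ^ 2)) :=
      (((tendsto_c1 k).neg.mul_const _).sub ((tendsto_c2 k).mul_const _))
    have := ((Complex.continuous_exp.tendsto _).comp hexp).mul
      (tendsto_const_nhds (x := φ z))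
    rwa [G_zero k x z] at this

lemma tendsto_B (φ : 𝓢(ℝ × ℝ, ℂ)) {k : ℝ} (hk : 0 < k) (x : ℝ × ℝ) :
    Tendsto (fun ε : ℝ => ∫ ξ : ℝ × ℝ,
        Complex.exp (Complex.I * ((x.1 * ξ.1 + x.2 * ξ.2 : ℝ) : ℂ)) *
          (Complex.exp (-(4 * c1 k ε)⁻¹ * (ξ.1 : ℂ) ^ 2) *
            Complex.exp (-(4 * c2 k ε)⁻¹ * (ξ.2 : ℂ) ^ 2)) *
          FT (fun w => φ w) ξ)
      (nhdsWithin 0 (Set.Ioi 0))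
      (nhds (∫ ξ : ℝ × ℝ,
        Complex.exp (Complex.I * ((x.1 * ξ.1 + x.2 * ξ.2 : ℝ) : ℂ)) *
          Complex.exp (-(Complex.I * (((ξ.1 ^ 2 - ξ.2 ^ 2) / k : ℝ) : ℂ))) *
          FT (fun w => φ w) ξ)) := by
  refine tendsto_integral_filter_of_dominated_convergence (fun ξ => ‖FT (fun w => φ w) ξ‖) ?_ ?_
    (FT_integrable φ).norm ?_
  · refine Filter.Eventually.of_forall fun ε => Continuous.aestronglyMeasurable ?_
    have hFT := FT_continuous φ
    have h1 : Continuous (fun ξ : ℝ × ℝ =>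
        Complex.exp (Complex.I * ((x.1 * ξ.1 + x.2 * ξ.2 : ℝ) : ℂ)) *
          (Complex.exp (-(4 * c1 k ε)⁻¹ * (ξ.1 : ℂ) ^ 2) *
            Complex.exp (-(4 * c2 k ε)⁻¹ * (ξ.2 : ℂ) ^ 2))) := by fun_prop
    exact h1.mul hFT
  · refine eventually_mem_nhdsWithin.mono fun ε hε => ?_
    refine Filter.Eventually.of_forall fun ξ => ?_
    have hre1 : 0 ≤ ((4 * c1 k ε)⁻¹).re :=
      le_of_lt (inv_re_pos (by rw [c1_re]; exact hε))
    have hre2 : 0 ≤ ((4 * c2 k ε)⁻¹).re :=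
      le_of_lt (inv_re_pos (by rw [c2_re]; exact hε))
    rw [norm_mul, norm_mul, norm_mul, norm_exp_I_mul]
    calc 1 * (‖Complex.exp (-(4 * c1 k ε)⁻¹ * (ξ.1 : ℂ) ^ 2)‖ *
            ‖Complex.exp (-(4 * c2 k ε)⁻¹ * (ξ.2 : ℂ) ^ 2)‖) * ‖FT (fun w => φ w) ξ‖
        ≤ 1 * (1 * 1) * ‖FT (fun w => φ w) ξ‖ := by
          gcongr
          · exact norm_exp_neg_mul_sq_le_one hre1 ξ.1
          · exact norm_exp_neg_mul_sq_le_one hre2 ξ.2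
      _ = ‖FT (fun w => φ w) ξ‖ := by ring
  · refine Filter.Eventually.of_forall fun ξ => ?_
    have hB1 : Tendsto (fun ε : ℝ => Complex.exp (-(4 * c1 k ε)⁻¹ * (ξ.1 : ℂ) ^ 2))
        (nhdsWithin 0 (Set.Ioi 0)) (nhds (Complex.exp (-(4 * c1 k 0)⁻¹ * (ξ.1 : ℂ) ^ 2))) :=
      (Complex.continuous_exp.tendsto _).comp
        ((((tendsto_c1 k).const_mul (4 : ℂ)).inv₀ (four_c1_ne hk)).neg.mul_const _)
    have hB2 : Tendsto (fun ε : ℝ => Complex.exp (-(4 * c2 k ε)⁻¹ * (ξ.2 : ℂ) ^ 2))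
        (nhdsWithin 0 (Set.Ioi 0)) (nhds (Complex.exp (-(4 * c2 k 0)⁻¹ * (ξ.2 : ℂ) ^ 2))) :=
      (Complex.continuous_exp.tendsto _).comp
        ((((tendsto_c2 k).const_mul (4 : ℂ)).inv₀ (four_c2_ne hk)).neg.mul_const _)
    have := (tendsto_const_nhds
        (x := Complex.exp (Complex.I * ((x.1 * ξ.1 + x.2 * ξ.2 : ℝ) : ℂ))).mul
        (hB1.mul hB2)).mul (tendsto_const_nhds (x := FT (fun w => φ w) ξ))
    rwa [B_zero_eq hk ξ] at this

end Stmt12Aux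

/-- the distributional Fresnel identity of Section 4. For every
Schwartz function `φ` on `ℝ²`, every `k > 0` and every `x ∈ ℝ²`,
`(k/(4π)) ∫ e^{i(k/4)((z₁-x₁)²-(z₂-x₂)²)} φ(z) dz
  = (2π)^{-2} ∫ e^{ix·ξ} e^{-i(ξ₁²-ξ₂²)/k} φ̂(ξ) dξ`. -/
theorem stmt12 (φ : SchwartzMap (ℝ × ℝ) ℂ) (k : ℝ) (hk : 0 < k) (x : ℝ × ℝ) :
    ((k / (4 * Real.pi) : ℝ) : ℂ) *
        ∫ z : ℝ × ℝ, Complex.exp (Complex.I * ((phase k x z : ℝ) : ℂ)) * φ z =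
      (2 * Real.pi : ℂ) ^ (-2 : ℤ) *
        ∫ ξ : ℝ × ℝ,
          Complex.exp (Complex.I * ((x.1 * ξ.1 + x.2 * ξ.2 : ℝ) : ℂ)) *
          Complex.exp (-(Complex.I * (((ξ.1 ^ 2 - ξ.2 ^ 2) / k : ℝ) : ℂ))) *
          FT (fun w => φ w) ξ := by
  classical
  have hL := Stmt12Aux.tendsto_G φ k x
  have hD := Stmt12Aux.tendsto_D hk
  have hB := Stmt12Aux.tendsto_B φ hk x
  have hstar : (fun ε : ℝ =>
      ((4 * (Real.pi : ℂ) * Stmt12Aux.c1 k ε) ^ (1 / 2 : ℂ) *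
        (4 * (Real.pi : ℂ) * Stmt12Aux.c2 k ε) ^ (1 / 2 : ℂ)) *
        ∫ z : ℝ × ℝ,
          Complex.exp (-(Stmt12Aux.c1 k ε) * ((z.1 - x.1 : ℝ) : ℂ) ^ 2
            - (Stmt12Aux.c2 k ε) * ((z.2 - x.2 : ℝ) : ℂ) ^ 2) * φ z)
      =ᶠ[nhdsWithin 0 (Set.Ioi 0)]
      (fun ε : ℝ => ∫ ξ : ℝ × ℝ,
        Complex.exp (Complex.I * ((x.1 * ξ.1 + x.2 * ξ.2 : ℝ) : ℂ)) *
          (Complex.exp (-(4 * Stmt12Aux.c1 k ε)⁻¹ * (ξ.1 : ℂ) ^ 2) *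
            Complex.exp (-(4 * Stmt12Aux.c2 k ε)⁻¹ * (ξ.2 : ℂ) ^ 2)) *
          FT (fun w => φ w) ξ) :=
    eventually_mem_nhdsWithin.mono fun ε hε => (Stmt12Aux.star_eq φ hk hε x).symm
  have hB2 := (hD.mul hL).congr' hstar
  have key := tendsto_nhds_unique hB hB2
  rw [key, ← mul_assoc]
  congr 1
  have hπ : (Real.pi : ℂ) ≠ 0 := Complex.ofReal_ne_zero.2 Real.pi_ne_zero
  have h2π : (2 * (Real.pi : ℂ)) ≠ 0 := by simp [hπ]
  rw [zpow_neg, eq_comm, inv_mul_eq_iff_eq_mul₀ (zpow_ne_zero _ h2π),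
    show ((2 : ℤ)) = ((2 : ℕ) : ℤ) from rfl, zpow_natCast]
  push_cast
  field_simp
  ring

end
end

section
/- Let F ∈ L¹(ℝ²) have compact support, and let k > 0 and x ∈ ℝ². Then lim_{N→∞} (2π)^{−2} ∫_{ℝ²} e^{i x·ξ} e^{−i(ξ₁²−ξ₂²)/k} e^{−|ξ|²/(4N²)} F̂(ξ) dξ = (k/(4π)) ∫_{ℝ²} e^{i(k/4)((z₁−x₁)²−(z₂−x₂)²)} F(z) dz. -/
open MeasureTheory Real Filter
open scoped ENNReal

noncomputable section

namespace Stmt13Aux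

/-- Kernel factor arising from the complex Gaussian integral. -/
def Ker (t : ℝ) (b : ℂ) : ℂ :=
  ((π : ℂ) / b) ^ (1 / 2 : ℂ) * Complex.exp (-(t : ℂ) ^ 2 / (4 * b))

lemma b_ne_zero {k : ℝ} (hk : 0 < k) {b : ℂ} (him : |b.im| = 1 / k) : b ≠ 0 := by
  intro h
  rw [h] at him
  simp only [Complex.zero_im, abs_zero] at him
  have : (0:ℝ) < 1 / k := by positivity
  linarith [him ▸ this]

lemma abs_b_ge {k : ℝ} (hk : 0 < k) {b : ℂ} (him : |b.im| = 1 / k) :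
    1 / k ≤ ‖b‖ := him ▸ Complex.abs_im_le_norm b

lemma norm_Ker_le {k : ℝ} (hk : 0 < k) {b : ℂ} (hre : 0 ≤ b.re) (him : |b.im| = 1 / k)
    (t : ℝ) : ‖Ker t b‖ ≤ Real.sqrt (π * k) := by
  have hb : b ≠ 0 := b_ne_zero hk him
  have hπ : (0:ℝ) < π := Real.pi_pos
  have habs : 1 / k ≤ ‖b‖ := abs_b_ge hk him
  have habs0 : 0 < ‖b‖ := lt_of_lt_of_le (by positivity) habs
  rw [Ker, norm_mul]
  have h1 : ‖((π : ℂ) / b) ^ (1 / 2 : ℂ)‖ ≤ Real.sqrt (π * k) := by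
    have : ((1:ℂ)/2) = ((1/2 : ℝ) : ℂ) := by norm_num
    rw [this, Complex.norm_cpow_real]
    have hq : ‖(π:ℂ)/b‖ = π / ‖b‖ := by
      rw [norm_div, Complex.norm_real, Real.norm_eq_abs, abs_of_pos hπ]
    rw [hq, Real.sqrt_eq_rpow]
    apply Real.rpow_le_rpow (by positivity) _ (by norm_num)
    rw [div_le_iff₀ habs0]
    calc π = (π * k) * (1/k) := by field_simp
    _ ≤ (π * k) * ‖b‖ := by
          apply mul_le_mul_of_nonneg_left habs (by positivity)
  have h2 : ‖Complex.exp (-(t : ℂ) ^ 2 / (4 * b))‖ ≤ 1 := by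
    rw [Complex.norm_exp, Real.exp_le_one_iff]
    have : (-(t : ℂ) ^ 2 / (4 * b)) = ((-(t^2) : ℝ) : ℂ) * (4*b)⁻¹ := by
      push_cast; ring
    rw [this, Complex.re_ofReal_mul, Complex.inv_re]
    apply mul_nonpos_of_nonpos_of_nonneg
    · nlinarith [sq_nonneg t]
    · apply div_nonneg _ (Complex.normSq_nonneg _)
      simp only [Complex.mul_re]
      norm_num
      nlinarith
  calc ‖((π : ℂ) / b) ^ (1 / 2 : ℂ)‖ * ‖Complex.exp (-(t : ℂ) ^ 2 / (4 * b))‖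
      ≤ Real.sqrt (π * k) * 1 := by
        apply mul_le_mul h1 h2 (norm_nonneg _) (Real.sqrt_nonneg _)
  _ = Real.sqrt (π * k) := mul_one _

lemma cpow_half_mul_conj {w : ℂ} (hw : w.im ≠ 0) :
    w ^ (1 / 2 : ℂ) * (starRingEnd ℂ w) ^ (1 / 2 : ℂ) = ((‖w‖ : ℝ) : ℂ) := by
  have harg : w.arg ≠ π := fun h => hw (Complex.arg_eq_pi_iff.mp h).2
  have hc : (starRingEnd ℂ) (1/2 : ℂ) = (1/2 : ℂ) := by
    rw [map_div₀, map_one, Complex.conj_ofNat]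
  have h1 : (starRingEnd ℂ w) ^ (1/2 : ℂ) = starRingEnd ℂ (w ^ (1/2 : ℂ)) := by
    rw [Complex.conj_cpow w _ harg, hc]
  rw [h1, Complex.mul_conj, Complex.normSq_eq_norm_sq]
  congr 1
  have : ((1:ℂ)/2) = ((1/2 : ℝ) : ℂ) := by norm_num
  rw [this, Complex.norm_cpow_real, ← Real.rpow_natCast (‖w‖ ^ (1/2:ℝ)) 2,
    ← Real.rpow_mul (norm_nonneg w)]
  norm_num


/-- The two complex Gaussian coefficients. -/
def bP (k N : ℝ) : ℂ := ((1/(4*N^2) : ℝ) : ℂ) + Complex.I / k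
def bM (k N : ℝ) : ℂ := ((1/(4*N^2) : ℝ) : ℂ) - Complex.I / k

lemma re_aux (r k : ℝ) : ((r:ℂ) + Complex.I/(k:ℂ)).re = r := by simp

lemma im_aux (r k : ℝ) : ((r:ℂ) + Complex.I/(k:ℂ)).im = 1/k := by simp [one_div]

lemma reM_aux (r k : ℝ) : ((r:ℂ) - Complex.I/(k:ℂ)).re = r := by simp

lemma imM_aux (r k : ℝ) : ((r:ℂ) - Complex.I/(k:ℂ)).im = -(1/k) := by simp [one_div]

lemma bP_re (k N : ℝ) : (bP k N).re = 1/(4*N^2) := re_aux _ _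

lemma bM_re (k N : ℝ) : (bM k N).re = 1/(4*N^2) := reM_aux _ _

lemma bP_im {k : ℝ} (hk : 0 < k) (N : ℝ) : (bP k N).im = 1/k := im_aux _ _

lemma bM_im {k : ℝ} (hk : 0 < k) (N : ℝ) : (bM k N).im = -(1/k) := imM_aux _ _

lemma conj_aux (r k : ℝ) : ((r:ℂ) - Complex.I/(k:ℂ)) = starRingEnd ℂ ((r:ℂ) + Complex.I/(k:ℂ)) := by
  apply Complex.ext
  · rw [Complex.conj_re, re_aux, reM_aux]
  · rw [Complex.conj_im, im_aux, imM_aux]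

lemma bM_eq_conj (k N : ℝ) : bM k N = starRingEnd ℂ (bP k N) := conj_aux _ _

lemma bP_ne {k : ℝ} (hk : 0 < k) (N : ℝ) : bP k N ≠ 0 :=
  b_ne_zero hk (by rw [bP_im hk]; exact abs_of_pos (by positivity))

lemma bM_ne {k : ℝ} (hk : 0 < k) (N : ℝ) : bM k N ≠ 0 :=
  b_ne_zero hk (by rw [bM_im hk, abs_neg]; exact abs_of_pos (by positivity))

lemma xi_integral {b₁ b₂ : ℂ} (h₁ : 0 < b₁.re) (h₂ : 0 < b₂.re) (t₁ t₂ : ℝ) :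
    (∫ ξ : ℝ × ℝ, (Complex.exp (Complex.I * t₁ * ξ.1) * Complex.exp (-b₁ * ξ.1 ^ 2)) *
      (Complex.exp (Complex.I * t₂ * ξ.2) * Complex.exp (-b₂ * ξ.2 ^ 2))) =
    Ker t₁ b₁ * Ker t₂ b₂ := by
  calc (∫ ξ : ℝ × ℝ, (Complex.exp (Complex.I * t₁ * ξ.1) * Complex.exp (-b₁ * ξ.1 ^ 2)) *
      (Complex.exp (Complex.I * t₂ * ξ.2) * Complex.exp (-b₂ * ξ.2 ^ 2)))
      = (∫ u : ℝ, Complex.exp (Complex.I * t₁ * u) * Complex.exp (-b₁ * u ^ 2)) *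
        (∫ u : ℝ, Complex.exp (Complex.I * t₂ * u) * Complex.exp (-b₂ * u ^ 2)) := by
        rw [MeasureTheory.Measure.volume_eq_prod ℝ ℝ]
        exact MeasureTheory.integral_prod_mul
          (fun u : ℝ => Complex.exp (Complex.I * t₁ * u) * Complex.exp (-b₁ * u ^ 2))
          (fun u : ℝ => Complex.exp (Complex.I * t₂ * u) * Complex.exp (-b₂ * u ^ 2))
  _ = Ker t₁ b₁ * Ker t₂ b₂ := by
        rw [fourierIntegral_gaussian h₁ (t₁ : ℂ), fourierIntegral_gaussian h₂ (t₂ : ℂ), Ker, Ker]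

lemma exp_lim_P {k : ℝ} (hk : 0 < k) (t : ℝ) :
    (-(t:ℂ)^2/(4*(Complex.I/k))) = Complex.I * ((k*t^2/4 : ℝ):ℂ) := by
  have hk' : (k:ℂ) ≠ 0 := by exact_mod_cast ne_of_gt hk
  have hI : Complex.I ≠ 0 := Complex.I_ne_zero
  field_simp
  simp only [Complex.ofReal_div, Complex.ofReal_mul, Complex.ofReal_pow, Complex.ofReal_ofNat]
  linear_combination (-(↑k * ↑t ^ 2 : ℂ)) * Complex.I_sq

lemma exp_lim_M {k : ℝ} (hk : 0 < k) (t : ℝ) :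
    (-(t:ℂ)^2/(4*((0:ℂ)-Complex.I/k))) = -(Complex.I * ((k*t^2/4 : ℝ):ℂ)) := by
  have hk' : (k:ℂ) ≠ 0 := by exact_mod_cast ne_of_gt hk
  have hI : Complex.I ≠ 0 := Complex.I_ne_zero
  field_simp
  simp only [Complex.ofReal_div, Complex.ofReal_mul, Complex.ofReal_pow, Complex.ofReal_ofNat]
  linear_combination (-(↑k * ↑t ^ 2 : ℂ)) * Complex.I_sq

lemma Ker_prod_eq {k : ℝ} (hk : 0 < k) (N : ℝ) (t₁ t₂ : ℝ) :
    Ker t₁ (bP k N) * Ker t₂ (bM k N) =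
      ((‖(π:ℂ)/bP k N‖ : ℝ) : ℂ) *
        (Complex.exp (-(t₁:ℂ)^2/(4*bP k N)) * Complex.exp (-(t₂:ℂ)^2/(4*bM k N))) := by
  have him : ((π:ℂ)/bP k N).im ≠ 0 := by
    have h1 : ((π:ℂ)/bP k N) = (π:ℝ) * (bP k N)⁻¹ := by rw [div_eq_mul_inv]
    rw [h1, Complex.im_ofReal_mul, Complex.inv_im, bP_im hk]
    have hns : 0 < Complex.normSq (bP k N) := Complex.normSq_pos.2 (bP_ne hk N)
    have hπ := Real.pi_pos
    have hneg : π * (-(1/k) / Complex.normSq (bP k N)) < 0 := by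
      apply mul_neg_of_pos_of_neg hπ
      exact div_neg_of_neg_of_pos (neg_lt_zero.mpr (by positivity)) hns
    exact ne_of_lt hneg
  have hc : (π:ℂ)/bM k N = starRingEnd ℂ ((π:ℂ)/bP k N) := by
    rw [bM_eq_conj, map_div₀, Complex.conj_ofReal]
  rw [Ker, Ker, mul_mul_mul_comm, hc, cpow_half_mul_conj him]

lemma tendsto_ofReal_inv_sq : Tendsto (fun N : ℝ => (1/(4*N^2) : ℝ)) atTop (nhds 0) := by
  have h4 : Tendsto (fun N : ℝ => 4*N^2) atTop atTop := by
    apply Tendsto.const_mul_atTop (by norm_num : (0:ℝ) < 4)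
    exact tendsto_pow_atTop (by norm_num)
  exact (tendsto_inv_atTop_zero.comp h4).congr (fun N => by simp [Function.comp_apply, one_div])

lemma tendsto_bP {k : ℝ} (hk : 0 < k) :
    Tendsto (fun N => bP k N) atTop (nhds (Complex.I / k)) := by
  have := (Complex.continuous_ofReal.tendsto 0).comp tendsto_ofReal_inv_sq
  simpa [bP] using this.add_const (Complex.I / k)

lemma tendsto_bM {k : ℝ} (hk : 0 < k) :
    Tendsto (fun N => bM k N) atTop (nhds ((0:ℂ) - Complex.I / k)) := by
  have := (Complex.continuous_ofReal.tendsto 0).comp tendsto_ofReal_inv_sq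
  simpa [bM, sub_eq_add_neg] using this.add_const (-(Complex.I / k))


lemma tendsto_Kprod {k : ℝ} (hk : 0 < k) (t₁ t₂ : ℝ) :
    Tendsto (fun N => Ker t₁ (bP k N) * Ker t₂ (bM k N)) atTop
      (nhds (((π * k : ℝ) : ℂ) * Complex.exp (Complex.I * ((k/4*(t₁^2 - t₂^2) : ℝ) : ℂ)))) := by
  have hk' : (k:ℂ) ≠ 0 := by exact_mod_cast ne_of_gt hk
  have hIk : (Complex.I / (k:ℂ)) ≠ 0 := div_ne_zero Complex.I_ne_zero hk'
  have hA : Tendsto (fun N => ((‖(π:ℂ)/bP k N‖ : ℝ) : ℂ)) atTop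
      (nhds (((π*k : ℝ) : ℂ))) := by
    have h1 : Tendsto (fun N => (π:ℂ)/bP k N) atTop (nhds ((π:ℂ)/(Complex.I/k))) :=
      tendsto_const_nhds.div (tendsto_bP hk) hIk
    have h2 : Tendsto (fun N => (‖(π:ℂ)/bP k N‖ : ℝ)) atTop
        (nhds (‖(π:ℂ)/(Complex.I/k)‖)) :=
      (continuous_norm.tendsto _).comp h1
    have h3 : ‖(π:ℂ)/(Complex.I/(k:ℂ))‖ = π*k := by
      rw [norm_div, norm_div, Complex.norm_I, Complex.norm_real, Complex.norm_real,
          Real.norm_eq_abs, Real.norm_eq_abs,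
        abs_of_pos Real.pi_pos, abs_of_pos hk]
      field_simp
    rw [h3] at h2
    exact (Complex.continuous_ofReal.tendsto _).comp h2
  have hBP : Tendsto (fun N => Complex.exp (-(t₁:ℂ)^2/(4*bP k N))) atTop
      (nhds (Complex.exp (Complex.I * ((k*t₁^2/4 : ℝ):ℂ)))) := by
    have h4 : (4*(Complex.I/(k:ℂ))) ≠ 0 := mul_ne_zero (by norm_num) hIk
    have h1 : Tendsto (fun N => -(t₁:ℂ)^2/(4*bP k N)) atTop
        (nhds (-(t₁:ℂ)^2/(4*(Complex.I/k)))) :=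
      tendsto_const_nhds.div (tendsto_const_nhds.mul (tendsto_bP hk)) h4
    have h2 := (Complex.continuous_exp.tendsto _).comp h1
    rw [exp_lim_P hk] at h2
    exact h2
  have hBM : Tendsto (fun N => Complex.exp (-(t₂:ℂ)^2/(4*bM k N))) atTop
      (nhds (Complex.exp (-(Complex.I * ((k*t₂^2/4 : ℝ):ℂ))))) := by
    have h4 : (4*((0:ℂ)-Complex.I/(k:ℂ))) ≠ 0 := by
      rw [zero_sub]
      exact mul_ne_zero (by norm_num) (neg_ne_zero.mpr hIk)
    have h1 : Tendsto (fun N => -(t₂:ℂ)^2/(4*bM k N)) atTop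
        (nhds (-(t₂:ℂ)^2/(4*((0:ℂ)-Complex.I/k)))) :=
      tendsto_const_nhds.div (tendsto_const_nhds.mul (tendsto_bM hk)) h4
    have h2 := (Complex.continuous_exp.tendsto _).comp h1
    rw [exp_lim_M hk] at h2
    exact h2
  have hall := hA.mul (hBP.mul hBM)
  have hval : ((π*k : ℝ) : ℂ) *
      (Complex.exp (Complex.I * ((k*t₁^2/4 : ℝ):ℂ)) *
        Complex.exp (-(Complex.I * ((k*t₂^2/4 : ℝ):ℂ)))) =
      ((π * k : ℝ) : ℂ) * Complex.exp (Complex.I * ((k/4*(t₁^2 - t₂^2) : ℝ) : ℂ)) := by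
    rw [← Complex.exp_add]
    congr 2
    push_cast
    ring
  rw [hval] at hall
  exact Tendsto.congr (fun N => (Ker_prod_eq hk N t₁ t₂).symm) hall


lemma exp_combine (k N : ℝ) (x z ξ : ℝ × ℝ) :
    Complex.exp (Complex.I * ((x.1 * ξ.1 + x.2 * ξ.2 : ℝ) : ℂ)) *
    Complex.exp (-(Complex.I * (((ξ.1 ^ 2 - ξ.2 ^ 2) / k : ℝ) : ℂ))) *
    Complex.exp (-((((ξ.1 ^ 2 + ξ.2 ^ 2) / (4 * N ^ 2) : ℝ)) : ℂ)) *
    Complex.exp (-(Complex.I * ((z.1 * ξ.1 + z.2 * ξ.2 : ℝ) : ℂ))) =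
    (Complex.exp (Complex.I * ((x.1 - z.1 : ℝ):ℂ) * ξ.1) *
      Complex.exp (-(bP k N) * ξ.1 ^ 2)) *
    (Complex.exp (Complex.I * ((x.2 - z.2 : ℝ):ℂ) * ξ.2) *
      Complex.exp (-(bM k N) * ξ.2 ^ 2)) := by
  rw [← Complex.exp_add, ← Complex.exp_add, ← Complex.exp_add, ← Complex.exp_add,
    ← Complex.exp_add, ← Complex.exp_add, bP, bM]
  congr 1
  push_cast
  ring

lemma eval_integral (F : ℝ × ℝ → ℂ) (hF : Integrable F volume) (k : ℝ) (hk : 0 < k)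
    (x : ℝ × ℝ) (N : ℝ) (hN : 1 ≤ N) :
    (∫ ξ : ℝ × ℝ,
        Complex.exp (Complex.I * ((x.1 * ξ.1 + x.2 * ξ.2 : ℝ) : ℂ)) *
        Complex.exp (-(Complex.I * (((ξ.1 ^ 2 - ξ.2 ^ 2) / k : ℝ) : ℂ))) *
        Complex.exp (-((((ξ.1 ^ 2 + ξ.2 ^ 2) / (4 * N ^ 2) : ℝ)) : ℂ)) * FT F ξ) =
    ∫ z : ℝ × ℝ, (Ker (x.1 - z.1) (bP k N) * Ker (x.2 - z.2) (bM k N)) * F z := by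
  have hN0 : (0:ℝ) < N := lt_of_lt_of_le one_pos hN
  have hre1 : 0 < (bP k N).re := by rw [bP_re]; positivity
  have hre2 : 0 < (bM k N).re := by rw [bM_re]; positivity
  set c : (ℝ × ℝ) → ℂ := fun ξ =>
    Complex.exp (Complex.I * ((x.1 * ξ.1 + x.2 * ξ.2 : ℝ) : ℂ)) *
    Complex.exp (-(Complex.I * (((ξ.1 ^ 2 - ξ.2 ^ 2) / k : ℝ) : ℂ))) *
    Complex.exp (-((((ξ.1 ^ 2 + ξ.2 ^ 2) / (4 * N ^ 2) : ℝ)) : ℂ)) with hc_def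
  set H : (ℝ × ℝ) → (ℝ × ℝ) → ℂ := fun ξ z =>
    c ξ * (Complex.exp (-(Complex.I * ((z.1 * ξ.1 + z.2 * ξ.2 : ℝ) : ℂ))) * F z) with hH_def
  -- norm of c
  have hcnorm : ∀ ξ : ℝ × ℝ, ‖c ξ‖ = rexp (-((ξ.1^2+ξ.2^2)/(4*N^2))) := by
    intro ξ
    simp only [hc_def, norm_mul, Complex.norm_exp, Complex.neg_re,
      Complex.mul_re, Complex.I_re, Complex.I_im, Complex.ofReal_re, Complex.ofReal_im]
    norm_num
  -- integrability of the Gaussian majorant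
  have hg1 : Integrable (fun u : ℝ => rexp (-(1/(4*N^2)) * u^2)) volume :=
    integrable_exp_neg_mul_sq (by positivity)
  have hg : Integrable (fun ξ : ℝ × ℝ => rexp (-((ξ.1^2+ξ.2^2)/(4*N^2)))) volume := by
    rw [MeasureTheory.Measure.volume_eq_prod ℝ ℝ]
    apply (hg1.mul_prod hg1).congr
    filter_upwards with ξ
    rw [← Real.exp_add]
    congr 1
    ring
  have hB : Integrable
      (fun p : (ℝ × ℝ) × (ℝ × ℝ) => rexp (-((p.1.1^2+p.1.2^2)/(4*N^2))) * ‖F p.2‖)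
      (volume.prod volume) := hg.mul_prod hF.norm
  -- measurability
  have hker : Continuous (fun p : (ℝ × ℝ) × (ℝ × ℝ) =>
      c p.1 * Complex.exp (-(Complex.I * ((p.2.1 * p.1.1 + p.2.2 * p.1.2 : ℝ) : ℂ)))) := by
    simp only [hc_def]
    fun_prop
  have hmeas : AEStronglyMeasurable (fun p : (ℝ × ℝ) × (ℝ × ℝ) => H p.1 p.2)
      (volume.prod volume) := by
    apply (hker.aestronglyMeasurable.mul hF.aestronglyMeasurable.comp_snd).congr
    filter_upwards with p
    simp only [hH_def, Pi.mul_apply]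
    ring
  -- integrability of H on the product
  have hInt : Integrable (fun p : (ℝ × ℝ) × (ℝ × ℝ) => H p.1 p.2) (volume.prod volume) := by
    apply Integrable.mono' hB hmeas
    filter_upwards with p
    simp only [hH_def, norm_mul, hcnorm]
    have h4 : ‖Complex.exp (-(Complex.I * ((p.2.1 * p.1.1 + p.2.2 * p.1.2 : ℝ) : ℂ)))‖ = 1 := by
      simp only [Complex.norm_exp, Complex.neg_re, Complex.mul_re,
        Complex.I_re, Complex.I_im, Complex.ofReal_re, Complex.ofReal_im]
      norm_num
    rw [h4, one_mul]
  -- the computation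
  calc (∫ ξ : ℝ × ℝ, c ξ * FT F ξ)
      = ∫ ξ : ℝ × ℝ, ∫ z : ℝ × ℝ, H ξ z := by
        apply integral_congr_ae
        filter_upwards with ξ
        rw [FT, ← MeasureTheory.integral_const_mul]
  _ = ∫ z : ℝ × ℝ, ∫ ξ : ℝ × ℝ, H ξ z := integral_integral_swap hInt
  _ = ∫ z : ℝ × ℝ, (Ker (x.1 - z.1) (bP k N) * Ker (x.2 - z.2) (bM k N)) * F z := by
        apply integral_congr_ae
        filter_upwards with z
        have hpt : ∀ ξ : ℝ × ℝ, H ξ z =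
            ((Complex.exp (Complex.I * ((x.1 - z.1 : ℝ):ℂ) * ξ.1) *
              Complex.exp (-(bP k N) * ξ.1 ^ 2)) *
             (Complex.exp (Complex.I * ((x.2 - z.2 : ℝ):ℂ) * ξ.2) *
              Complex.exp (-(bM k N) * ξ.2 ^ 2))) * F z := by
          intro ξ
          simp only [hH_def, hc_def]
          rw [← exp_combine k N x z ξ]
          ring
        rw [integral_congr_ae (Eventually.of_forall hpt), MeasureTheory.integral_mul_const,
          xi_integral hre1 hre2]

end Stmt13Aux

open Stmt13Aux

/-- the pointwise limit formula (pointlim) of Section 4. For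
compactly supported `F ∈ L¹(ℝ²)`, `k > 0` and `x ∈ ℝ²`, the Gaussian-regularized
nonelliptic Schrödinger evolutions converge to the Bukhgeim integral:
`lim_{N→∞} (2π)^{-2} ∫ e^{ix·ξ} e^{-i(ξ₁²-ξ₂²)/k} e^{-|ξ|²/(4N²)} F̂(ξ) dξ
  = (k/(4π)) ∫ e^{i(k/4)((z₁-x₁)²-(z₂-x₂)²)} F(z) dz`. -/
theorem stmt13 (F : ℝ × ℝ → ℂ) (hF : Integrable F volume) (hsupp : HasCompactSupport F)
    (k : ℝ) (hk : 0 < k) (x : ℝ × ℝ) :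
    Filter.Tendsto (fun N : ℝ =>
        (2 * Real.pi : ℂ) ^ (-2 : ℤ) *
          ∫ ξ : ℝ × ℝ,
            Complex.exp (Complex.I * ((x.1 * ξ.1 + x.2 * ξ.2 : ℝ) : ℂ)) *
            Complex.exp (-(Complex.I * (((ξ.1 ^ 2 - ξ.2 ^ 2) / k : ℝ) : ℂ))) *
            Complex.exp (-((((ξ.1 ^ 2 + ξ.2 ^ 2) / (4 * N ^ 2) : ℝ)) : ℂ)) * FT F ξ)
      Filter.atTop
      (nhds (((k / (4 * Real.pi) : ℝ) : ℂ) *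
        ∫ z : ℝ × ℝ, Complex.exp (Complex.I * ((phase k x z : ℝ) : ℂ)) * F z)) := by
  have hπ : (0:ℝ) < π := Real.pi_pos
  have hbound_int : Integrable
      (fun z : ℝ × ℝ => Real.sqrt (π*k) * Real.sqrt (π*k) * ‖F z‖) volume :=
    hF.norm.const_mul _
  have hmeas : ∀ᶠ N : ℝ in atTop, AEStronglyMeasurable
      (fun z : ℝ × ℝ => (Ker (x.1 - z.1) (bP k N) * Ker (x.2 - z.2) (bM k N)) * F z)
      volume := by
    filter_upwards with N
    have hcont : Continuous fun z : ℝ × ℝ =>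
        Ker (x.1 - z.1) (bP k N) * Ker (x.2 - z.2) (bM k N) := by
      unfold Ker
      fun_prop
    exact hcont.aestronglyMeasurable.mul hF.aestronglyMeasurable
  have hbP_re : ∀ N : ℝ, 0 ≤ (bP k N).re := fun N => by rw [bP_re]; positivity
  have hbM_re : ∀ N : ℝ, 0 ≤ (bM k N).re := fun N => by rw [bM_re]; positivity
  have hbP_im : ∀ N : ℝ, |(bP k N).im| = 1/k := fun N => by
    rw [bP_im hk]; exact abs_of_pos (by positivity)
  have hbM_im : ∀ N : ℝ, |(bM k N).im| = 1/k := fun N => by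
    rw [bM_im hk, abs_neg]; exact abs_of_pos (by positivity)
  have hbound : ∀ᶠ N : ℝ in atTop, ∀ᵐ z : ℝ × ℝ ∂volume,
      ‖(Ker (x.1 - z.1) (bP k N) * Ker (x.2 - z.2) (bM k N)) * F z‖ ≤
        Real.sqrt (π*k) * Real.sqrt (π*k) * ‖F z‖ := by
    filter_upwards with N
    filter_upwards with z
    rw [norm_mul, norm_mul]
    apply mul_le_mul_of_nonneg_right _ (norm_nonneg _)
    exact mul_le_mul (norm_Ker_le hk (hbP_re N) (hbP_im N) _)
      (norm_Ker_le hk (hbM_re N) (hbM_im N) _) (norm_nonneg _) (Real.sqrt_nonneg _)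
  have hlim : ∀ᵐ z : ℝ × ℝ ∂volume, Tendsto
      (fun N : ℝ => (Ker (x.1 - z.1) (bP k N) * Ker (x.2 - z.2) (bM k N)) * F z) atTop
      (nhds (((π*k : ℝ):ℂ) * (Complex.exp (Complex.I * ((phase k x z : ℝ):ℂ)) * F z))) := by
    filter_upwards with z
    have h := (tendsto_Kprod hk (x.1 - z.1) (x.2 - z.2)).mul_const (F z)
    have harg : (k/4*((x.1 - z.1)^2 - (x.2 - z.2)^2) : ℝ) = phase k x z := by
      rw [phase]; ring
    rw [harg, mul_assoc] at h
    exact h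
  have hDCT := MeasureTheory.tendsto_integral_filter_of_dominated_convergence _
    hmeas hbound hbound_int hlim
  have hfinal := hDCT.const_mul ((2 * Real.pi : ℂ) ^ (-2 : ℤ))
  have hval : (2 * (Real.pi:ℂ)) ^ (-2 : ℤ) *
      (∫ z : ℝ × ℝ, ((π*k : ℝ):ℂ) *
        (Complex.exp (Complex.I * ((phase k x z : ℝ):ℂ)) * F z)) =
      ((k / (4 * Real.pi) : ℝ) : ℂ) *
        ∫ z : ℝ × ℝ, Complex.exp (Complex.I * ((phase k x z : ℝ):ℂ)) * F z := by
    rw [MeasureTheory.integral_const_mul, ← mul_assoc]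
    congr 1
    have hπC : ((Real.pi : ℂ)) ≠ 0 := by exact_mod_cast Real.pi_ne_zero
    rw [zpow_neg]
    have h2 : (2 * (π:ℂ)) ^ (2:ℤ) = 4 * (π:ℂ)^2 := by
      rw [zpow_two]; ring
    rw [h2]
    push_cast
    field_simp
  rw [hval] at hfinal
  apply hfinal.congr'
  filter_upwards [eventually_ge_atTop (1:ℝ)] with N hN
  rw [eval_integral F hF k hk x N hN]


end
end
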